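/- arXiv:2604.22236 — 3 statements merged into one kernel-verified Lean document; each statement's English description precedes it below -/
import Mathlib

section
/- Under the stability assumption and proportional bandwidth k_d/d → α ∈ (0,1), the asymptotic normalized risk of optimal fixed highlighting (revealing the k_d coordinates with the largest p*_{d,(j)}), which is the same for naive and sophisticated agents and equals E[(1/d) Σ_{j=1}^{d−k_d} (X*_{d,(j)} − p*_{d,(j)})²] = (1/d) Σ_{j=1}^{d−k_d} p*_{d,(j)}(1 − p*_{d,(j)}), converges as d → ∞ to ∫_0^{1−α} Q*(q)(1 − Q*(q)) dq. -/
open Finset MeasureTheory ProbabilityTheory Filter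

lemma aux_downset {d : ℕ} {S : Finset ℕ} (hsub : S ⊆ Finset.range d)
    (hdc : ∀ i j : ℕ, i ≤ j → j ∈ S → i ∈ S) : S = Finset.range S.card := by
  ext j
  simp only [Finset.mem_range]
  constructor
  · intro hj
    have h1 : Finset.range (j+1) ⊆ S := fun i hi =>
      hdc i j (Nat.lt_succ_iff.mp (Finset.mem_range.mp hi)) hj
    have := Finset.card_le_card h1
    simpa using this
  · intro hj
    by_contra hjS
    have h2 : S ⊆ Finset.range j := by
      intro i hi
      simp only [Finset.mem_range]
      by_contra hij
      exact hjS (hdc j i (le_of_not_gt hij) hi)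
    have := Finset.card_le_card h2
    simp at this
    omega

/-- counting lemma: for sorted values, `q_j ≤ t ↔ j < N` where `N` is the count. -/
lemma aux_sorted_count {d : ℕ} (q : ℕ → ℝ) (hmono : ∀ j j', j ≤ j' → j' < d → q j ≤ q j')
    (t : ℝ) {j : ℕ} (hj : j < d) :
    (q j ≤ t ↔ j < ((Finset.range d).filter (fun i => q i ≤ t)).card) := by
  set S := (Finset.range d).filter (fun i => q i ≤ t) with hS
  have hsub : S ⊆ Finset.range d := Finset.filter_subset _ _
  have hdc : ∀ i j : ℕ, i ≤ j → j ∈ S → i ∈ S := by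
    intro i j' hij hj'
    simp only [hS, Finset.mem_filter, Finset.mem_range] at hj' ⊢
    exact ⟨lt_of_le_of_lt hij hj'.1, le_trans (hmono i j' hij hj'.1) hj'.2⟩
  have hrange := aux_downset hsub hdc
  constructor
  · intro hq
    have : j ∈ S := by simp [hS, hj, hq]
    rw [hrange] at this
    simpa using this
  · intro hlt
    have : j ∈ S := by rw [hrange]; simpa using hlt
    simp only [hS, Finset.mem_filter] at this
    exact this.2

lemma aux_bern_eq {Ω : Type*} (Y : Ω → ℝ) (h01 : ∀ ω, Y ω = 0 ∨ Y ω = 1) (c : ℝ) :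
    (fun ω => (Y ω - c)^2)
      = fun ω => c^2 + (1 - 2*c) * Set.indicator {ω | Y ω = 1} (fun _ => (1:ℝ)) ω := by
  funext ω
  rcases h01 ω with h | h
  · rw [Set.indicator_of_notMem (by simp [Set.mem_setOf_eq, h])]
    rw [h]; ring
  · rw [Set.indicator_of_mem (by simp [Set.mem_setOf_eq, h])]
    rw [h]; ring

lemma aux_bern_integrable {Ω : Type*} [MeasurableSpace Ω] (μ : Measure Ω)
    [IsProbabilityMeasure μ] (Y : Ω → ℝ) (hmeas : Measurable Y)
    (h01 : ∀ ω, Y ω = 0 ∨ Y ω = 1) (c : ℝ) :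
    Integrable (fun ω => (Y ω - c)^2) μ := by
  rw [aux_bern_eq Y h01 c]
  have hA : MeasurableSet {ω | Y ω = 1} := hmeas (measurableSet_singleton 1)
  exact (integrable_const _).add (((integrable_const (1:ℝ)).indicator hA).const_mul _)

lemma aux_bern_sq {Ω : Type*} [MeasurableSpace Ω] (μ : Measure Ω) [IsProbabilityMeasure μ]
    (Y : Ω → ℝ) (hmeas : Measurable Y) (h01 : ∀ ω, Y ω = 0 ∨ Y ω = 1)
    (c : ℝ) (hc : μ {ω | Y ω = 1} = ENNReal.ofReal c) (hc0 : 0 ≤ c) :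
    ∫ ω, (Y ω - c)^2 ∂μ = c * (1 - c) := by
  rw [aux_bern_eq Y h01 c]
  have hA : MeasurableSet {ω | Y ω = 1} := hmeas (measurableSet_singleton 1)
  rw [integral_add (integrable_const _)
    (((integrable_const (1:ℝ)).indicator hA).const_mul _)]
  rw [MeasureTheory.integral_const_mul]
  have : ∫ ω, Set.indicator {ω | Y ω = 1} (fun _ => (1:ℝ)) ω ∂μ
      = (μ {ω | Y ω = 1}).toReal := by
    rw [integral_indicator hA]
    simp [measureReal_def]
  rw [this, hc, ENNReal.toReal_ofReal hc0]
  simp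
  ring

lemma aux_xstar {Ω : Type*} [MeasurableSpace Ω] (μ : Measure Ω) [IsProbabilityMeasure μ]
    (X : Ω → ℝ) (hm : Measurable X) (h01 : ∀ ω, X ω = 0 ∨ X ω = 1)
    (q : ℝ) (hq : q ∈ Set.Icc (0:ℝ) 1)
    (hb : μ {ω | X ω = 1} = ENNReal.ofReal q)
    (Y : Ω → ℝ) (hY : ∀ ω, Y ω = if q ≤ 1/2 then X ω else 1 - X ω) :
    Measurable Y ∧ (∀ ω, Y ω = 0 ∨ Y ω = 1)
      ∧ μ {ω | Y ω = 1} = ENNReal.ofReal (min q (1-q)) := by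
  by_cases hq2 : q ≤ 1/2
  · have hYX : Y = X := funext fun ω => by rw [hY ω, if_pos hq2]
    have hmin : min q (1-q) = q := min_eq_left (by linarith)
    rw [hYX, hmin]
    exact ⟨hm, h01, hb⟩
  · have hYX : Y = fun ω => 1 - X ω := funext fun ω => by rw [hY ω, if_neg hq2]
    have hmin : min q (1-q) = 1 - q := min_eq_right (by linarith)
    rw [hYX, hmin]
    refine ⟨measurable_const.sub hm, fun ω => ?_, ?_⟩
    · rcases h01 ω with h | h <;> simp [h]
    · have hset : {ω | (1:ℝ) - X ω = 1} = {ω | X ω = 1}ᶜ := by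
        ext ω
        rcases h01 ω with h | h <;> simp [h]
      have hA : MeasurableSet {ω | X ω = 1} := hm (measurableSet_singleton 1)
      rw [hset, measure_compl hA (measure_ne_top _ _), measure_univ, hb]
      rw [ENNReal.ofReal_sub _ hq.1, ENNReal.ofReal_one]

lemma aux_Glt (F : ℝ → ℝ) (a : ℕ → ℕ → ℝ)
    (hconv : ∀ t ∈ Set.Ioo (0:ℝ) 1, ContinuousAt F t →
      Tendsto (fun d : ℕ => (1/(d:ℝ)) * ∑ i ∈ Finset.range d,
        (if a d i ≤ t then (1:ℝ) else 0)) atTop (nhds (F t)))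
    (hdense : ∀ u v : ℝ, 0 ≤ u → v ≤ 1 → u < v →
      ∃ t, t ∈ Set.Ioo u v ∧ ContinuousAt F t)
    (s : ℝ) (hs : s ∈ Set.Ioo (0:ℝ) 1) (hcs : ContinuousAt F s) :
    Tendsto (fun d : ℕ => (1/(d:ℝ)) * ∑ i ∈ Finset.range d,
      (if a d i < s then (1:ℝ) else 0)) atTop (nhds (F s)) := by
  rw [Metric.tendsto_atTop]
  intro ε hε
  obtain ⟨δ, hδ, hδc⟩ := Metric.continuousAt_iff.mp hcs (ε/2) (by linarith)
  obtain ⟨t', ht'mem, ht'c⟩ := hdense (max (s - δ/2) 0) s (le_max_right _ _) hs.2.le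
    (max_lt (by linarith) hs.1)
  have ht'0 : 0 < t' := lt_of_le_of_lt (le_max_right _ _) ht'mem.1
  have ht's : t' < s := ht'mem.2
  have hFt' : |F t' - F s| < ε/2 := by
    have : dist t' s < δ := by
      rw [Real.dist_eq, abs_lt]
      have := lt_of_le_of_lt (le_max_left (s - δ/2) 0) ht'mem.1
      constructor <;> linarith
    have := hδc this
    rwa [Real.dist_eq] at this
  have h1 := (hconv t' ⟨ht'0, ht's.trans hs.2⟩ ht'c)
  have h2 := (hconv s hs hcs)
  rw [Metric.tendsto_atTop] at h1 h2
  obtain ⟨N1, hN1⟩ := h1 (ε/2) (by linarith)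
  obtain ⟨N2, hN2⟩ := h2 (ε/2) (by linarith)
  refine ⟨max N1 N2, fun d hd => ?_⟩
  have hd1 := hN1 d (le_trans (le_max_left _ _) hd)
  have hd2 := hN2 d (le_trans (le_max_right _ _) hd)
  rw [Real.dist_eq, abs_lt] at hd1 hd2 ⊢
  have hdnn : (0:ℝ) ≤ 1/(d:ℝ) := by positivity
  have hle1 : (1/(d:ℝ)) * ∑ i ∈ Finset.range d, (if a d i ≤ t' then (1:ℝ) else 0)
      ≤ (1/(d:ℝ)) * ∑ i ∈ Finset.range d, (if a d i < s then (1:ℝ) else 0) := by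
    refine mul_le_mul_of_nonneg_left (Finset.sum_le_sum fun i _ => ?_) hdnn
    split_ifs with hA hB
    · exact le_refl _
    · exact absurd (lt_of_le_of_lt hA ht's) hB
    · norm_num
    · exact le_refl _
  have hle2 : (1/(d:ℝ)) * ∑ i ∈ Finset.range d, (if a d i < s then (1:ℝ) else 0)
      ≤ (1/(d:ℝ)) * ∑ i ∈ Finset.range d, (if a d i ≤ s then (1:ℝ) else 0) := by
    refine mul_le_mul_of_nonneg_left (Finset.sum_le_sum fun i _ => ?_) hdnn
    split_ifs with hA hB
    · exact le_refl _
    · exact absurd hA.le hB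
    · norm_num
    · exact le_refl _
  rw [abs_lt] at hFt'
  exact ⟨by linarith [hle1, hd1.1, hFt'.1], by linarith [hle2, hd2.2]⟩

lemma aux_psi {d m : ℕ} (hd : 1 ≤ d) (hmd : m ≤ d) (v : ℕ → ℝ) (q : ℝ) :
    (∑ j ∈ Finset.range m,
      Set.indicator (Set.Ico ((j:ℝ)/d) (((j:ℝ)+1)/d)) (fun _ => v j) q)
      = if 0 ≤ q ∧ ⌊q*d⌋₊ < m then v ⌊q*d⌋₊ else 0 := by
  have hd0 : (0:ℝ) < d := by exact_mod_cast hd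
  have hmem : ∀ j : ℕ, (q ∈ Set.Ico ((j:ℝ)/d) (((j:ℝ)+1)/d)) ↔ (0 ≤ q ∧ ⌊q*d⌋₊ = j) := by
    intro j
    constructor
    · rintro ⟨h1, h2⟩
      have hq0 : 0 ≤ q := le_trans (by positivity) h1
      refine ⟨hq0, le_antisymm ?_ ?_⟩
      · have hqd : q * d < (j:ℝ) + 1 := by
          rw [lt_div_iff₀ hd0] at h2
          linarith
        have hfl : ⌊q*d⌋₊ < j + 1 := by
          apply (Nat.floor_lt (mul_nonneg hq0 hd0.le)).mpr
          push_cast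
          linarith
        omega
      · exact Nat.le_floor (by rw [div_le_iff₀ hd0] at h1; linarith)
    · rintro ⟨hq0, hj⟩
      subst hj
      constructor
      · rw [div_le_iff₀ hd0]
        exact Nat.floor_le (by positivity)
      · rw [lt_div_iff₀ hd0]
        have := Nat.lt_floor_add_one (q * d)
        push_cast
        linarith
  have hterm : ∀ j : ℕ, Set.indicator (Set.Ico ((j:ℝ)/d) (((j:ℝ)+1)/d)) (fun _ => v j) q
      = if (0 ≤ q ∧ ⌊q*d⌋₊ = j) then v j else 0 := by
    intro j
    rw [Set.indicator_apply, if_congr (hmem j) rfl rfl]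
  simp_rw [hterm]
  by_cases hq0 : 0 ≤ q
  · simp only [hq0, true_and]
    rw [Finset.sum_ite_eq (Finset.range m) (⌊q*d⌋₊) v]
    simp [Finset.mem_range]
  · simp [hq0]

lemma aux_psi_integral {d m : ℕ} (hd : 1 ≤ d) (hmd : m ≤ d) (v : ℕ → ℝ) :
    ∫ q : ℝ, (∑ j ∈ Finset.range m,
      Set.indicator (Set.Ico ((j:ℝ)/d) (((j:ℝ)+1)/d)) (fun _ => v j) q)
      = (1/(d:ℝ)) * ∑ j ∈ Finset.range m, v j := by
  have hd0 : (0:ℝ) < d := by exact_mod_cast hd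
  have hint : ∀ j : ℕ, Integrable
      (Set.indicator (Set.Ico ((j:ℝ)/d) (((j:ℝ)+1)/d)) (fun _ => v j)) volume := by
    intro j
    rw [integrable_indicator_iff measurableSet_Ico]
    exact integrableOn_const (by rw [Real.volume_Ico]; exact ENNReal.ofReal_ne_top)
  rw [integral_finset_sum _ (fun j _ => hint j)]
  rw [Finset.mul_sum]
  refine Finset.sum_congr rfl fun j _ => ?_
  rw [integral_indicator measurableSet_Ico, setIntegral_const, measureReal_def, Real.volume_Ico]
  have h1 : ((j:ℝ)+1)/d - (j:ℝ)/d = 1/d := by field_simp; ring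
  rw [h1, ENNReal.toReal_ofReal (by positivity)]
  rw [smul_eq_mul]

lemma aux_psi_meas {d m : ℕ} (v : ℕ → ℝ) :
    Measurable (fun q : ℝ => ∑ j ∈ Finset.range m,
      Set.indicator (Set.Ico ((j:ℝ)/d) (((j:ℝ)+1)/d)) (fun _ => v j) q) :=
  Finset.measurable_sum _ (fun j _ => measurable_const.indicator measurableSet_Ico)

lemma aux_bad_countable (Fstar Qstar : ℝ → ℝ)
    (hFstar_mono : MonotoneOn Fstar (Set.Icc 0 1))
    (hFs_half : Fstar (1/2) = 1)
    (hQ : ∀ q, Qstar q = sInf {t | t ∈ Set.Icc (0:ℝ) 1 ∧ q ≤ Fstar t})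
    (β : ℝ) (hβ : β < 1) :
    Set.Countable {q | q ∈ Set.Ioo (0:ℝ) β ∧ ∃ t, Qstar q < t ∧ t ≤ 1 ∧ Fstar t ≤ q} := by
  set B := {q | q ∈ Set.Ioo (0:ℝ) β ∧ ∃ t, Qstar q < t ∧ t ≤ 1 ∧ Fstar t ≤ q} with hB
  have hne : ∀ q : ℝ, q ≤ 1 → (1/2 : ℝ) ∈ {t | t ∈ Set.Icc (0:ℝ) 1 ∧ q ≤ Fstar t} := by
    intro q hq
    exact ⟨⟨by norm_num, by norm_num⟩, by rw [hFs_half]; exact hq⟩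
  have hQ0 : ∀ q : ℝ, q ≤ 1 → 0 ≤ Qstar q := by
    intro q hq
    rw [hQ q]
    exact le_csInf ⟨_, hne q hq⟩ (fun x hx => hx.1.1)
  -- rational selection
  classical
  have hsel : ∀ q ∈ B, ∃ r : ℚ, Qstar q < (r:ℝ) ∧
      ∀ q' ∈ B, q < q' → (r:ℝ) ≤ Qstar q' := by
    intro q hq
    obtain ⟨hqI, t, ht1, ht2, ht3⟩ := hq
    obtain ⟨r, hr1, hr2⟩ := exists_rat_btwn ht1
    refine ⟨r, hr1, fun q' hq' hqq' => ?_⟩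
    have ht1le : t ≤ Qstar q' := by
      rw [hQ q']
      refine le_csInf ⟨_, hne q' (le_of_lt (lt_trans hq'.1.2 hβ))⟩ ?_
      intro x hx
      by_contra hxt
      push_neg at hxt
      have htIcc : t ∈ Set.Icc (0:ℝ) 1 :=
        ⟨le_trans (hQ0 q (le_of_lt (lt_trans hqI.2 hβ))) ht1.le, ht2⟩
      have : Fstar x ≤ Fstar t := hFstar_mono hx.1 htIcc hxt.le
      linarith [hx.2]
    exact le_trans hr2.le ht1le
  choose! r hr1 hr2 using hsel
  rw [Set.countable_iff_exists_injOn]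
  refine ⟨fun q => Encodable.encode (r q), ?_⟩
  intro q1 h1 q2 h2 heq
  have hrr : r q1 = r q2 := Encodable.encode_injective heq
  by_contra hne12
  rcases lt_or_gt_of_ne hne12 with h | h
  · have := lt_of_le_of_lt (hr2 q1 h1 q2 h2 h) (hr1 q2 h2)
    rw [hrr] at this
    exact lt_irrefl _ this
  · have := lt_of_le_of_lt (hr2 q2 h2 q1 h1 h) (hr1 q1 h1)
    rw [hrr] at this
    exact lt_irrefl _ this

theorem stmt_3
    -- the triangular array of independent Bernoulli random variables
    {Ω : ℕ → Type*} [∀ d, MeasurableSpace (Ω d)]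
    (μ : ∀ d, Measure (Ω d)) [∀ d, IsProbabilityMeasure (μ d)]
    (p : ℕ → ℕ → ℝ) (hp : ∀ d i, i < d → p d i ∈ Set.Icc (0 : ℝ) 1)
    (X : ∀ d, ℕ → Ω d → ℝ)
    (hmeas : ∀ d i, Measurable (X d i))
    (hval : ∀ d i ω, X d i ω = 0 ∨ X d i ω = 1)
    (hbern : ∀ d i, i < d → μ d {ω | X d i ω = 1} = ENNReal.ofReal (p d i))
    (hindep : ∀ d, iIndepFun
      (fun i : Fin d => X d (i : ℕ)) (μ d))
    -- transformed quantities
    (pstar : ℕ → ℕ → ℝ)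
    (hpstar : ∀ d i, pstar d i = min (p d i) (1 - p d i))
    (Xstar : ∀ d, ℕ → Ω d → ℝ)
    (hXstar : ∀ d i ω,
      Xstar d i ω = if p d i ≤ 1 / 2 then X d i ω else 1 - X d i ω)
    -- an ordering of {0,…,d−1} making `pstar` nondecreasing
    (ord : ℕ → ℕ → ℕ)
    (hord_bij : ∀ d, Set.BijOn (ord d) (Set.Iio d) (Set.Iio d))
    (hord_mono : ∀ d j j', j ≤ j' → j' < d →
      pstar d (ord d j) ≤ pstar d (ord d j'))
    -- the stability assumption
    (F : ℝ → ℝ)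
    (hF_mono : MonotoneOn F (Set.Icc 0 1))
    (hF_rc : ∀ t ∈ Set.Ico (0 : ℝ) 1,
      Tendsto F (nhdsWithin t (Set.Ioi t)) (nhds (F t)))
    (hF0 : Tendsto F (nhdsWithin 0 (Set.Ioi 0)) (nhds 0))
    (hF1 : Tendsto F (nhdsWithin 1 (Set.Iio 1)) (nhds 1))
    (hstab : ∀ t ∈ Set.Icc (0 : ℝ) 1, ContinuousWithinAt F (Set.Icc 0 1) t →
      Tendsto (fun d : ℕ => (1 / (d : ℝ)) *
          ∑ i ∈ Finset.range d, (if p d i ≤ t then (1 : ℝ) else 0))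
        atTop (nhds (F t)))
    -- the transformed cdf and its quantile function
    (Fstar : ℝ → ℝ)
    (hFstar : ∀ t, Fstar t = if t ≤ 1 / 2 then F t + 1 - F (1 - t) else 1)
    (hFstar_cont : ContinuousOn Fstar (Set.Icc 0 1))
    (hFstar_mono : MonotoneOn Fstar (Set.Icc 0 1))
    (Qstar : ℝ → ℝ)
    (hQ : ∀ q, Qstar q = sInf {t | t ∈ Set.Icc (0 : ℝ) 1 ∧ q ≤ Fstar t})
    -- proportional bandwidth
    (k : ℕ → ℕ) (α : ℝ) (hα : α ∈ Set.Ioo (0 : ℝ) 1)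
    (hk : Tendsto (fun d : ℕ => (k d : ℝ) / d) atTop (nhds α)) :
    -- the normalized risk equals the deterministic sum …
    (∀ d : ℕ,
      (∫ ω, (1 / (d : ℝ)) * ∑ j ∈ Finset.range (d - k d),
          (Xstar d (ord d j) ω - pstar d (ord d j)) ^ 2 ∂(μ d))
        = (1 / (d : ℝ)) * ∑ j ∈ Finset.range (d - k d),
            pstar d (ord d j) * (1 - pstar d (ord d j))) ∧
    -- … and converges to the limiting integral
    Tendsto (fun d : ℕ => (1 / (d : ℝ)) * ∑ j ∈ Finset.range (d - k d),
        pstar d (ord d j) * (1 - pstar d (ord d j)))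
      atTop (nhds (∫ q in (0 : ℝ)..(1 - α), Qstar q * (1 - Qstar q))) := by
  have hord_lt : ∀ d j, j < d → ord d j < d := fun d j hj => (hord_bij d).mapsTo hj
  have part1 : ∀ d : ℕ,
      (∫ ω, (1 / (d : ℝ)) * ∑ j ∈ Finset.range (d - k d),
          (Xstar d (ord d j) ω - pstar d (ord d j)) ^ 2 ∂(μ d))
        = (1 / (d : ℝ)) * ∑ j ∈ Finset.range (d - k d),
            pstar d (ord d j) * (1 - pstar d (ord d j)) := by
    intro d
    have hdata : ∀ j ∈ Finset.range (d - k d),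
        Measurable (Xstar d (ord d j)) ∧ (∀ ω, Xstar d (ord d j) ω = 0 ∨ Xstar d (ord d j) ω = 1)
          ∧ μ d {ω | Xstar d (ord d j) ω = 1} = ENNReal.ofReal (pstar d (ord d j)) := by
      intro j hj
      have hj' : j < d := lt_of_lt_of_le (Finset.mem_range.mp hj) (Nat.sub_le d (k d))
      have hi := hord_lt d j hj'
      have h := aux_xstar (μ d) (X d (ord d j)) (hmeas d _) (hval d _)
        (p d (ord d j)) (hp d _ hi) (hbern d _ hi) (Xstar d (ord d j)) (fun ω => hXstar d _ ω)
      rwa [← hpstar d (ord d j)] at h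
    have hps0 : ∀ j ∈ Finset.range (d - k d), 0 ≤ pstar d (ord d j) := by
      intro j hj
      have hj' : j < d := lt_of_lt_of_le (Finset.mem_range.mp hj) (Nat.sub_le d (k d))
      have hpi := hp d _ (hord_lt d j hj')
      rw [hpstar]
      exact le_min hpi.1 (by linarith [hpi.2])
    rw [MeasureTheory.integral_const_mul]
    congr 1
    rw [integral_finset_sum _ (fun j hj => by
      obtain ⟨hYm, hY01, _⟩ := hdata j hj
      exact aux_bern_integrable (μ d) _ hYm hY01 _)]
    refine Finset.sum_congr rfl fun j hj => ?_
    obtain ⟨hYm, hY01, hYb⟩ := hdata j hj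
    exact aux_bern_sq (μ d) _ hYm hY01 _ hYb (hps0 j hj)
  refine ⟨part1, ?_⟩
  -- Part 2
  set β : ℝ := 1 - α with hβdef
  have hβ0 : 0 < β := by rw [hβdef]; linarith [hα.2]
  have hβ1 : β < 1 := by rw [hβdef]; linarith [hα.1]
  have hps_mem : ∀ d i, i < d → pstar d i ∈ Set.Icc (0:ℝ) (1/2) := by
    intro d i hi
    have hpi := hp d i hi
    rw [hpstar]
    constructor
    · exact le_min hpi.1 (by linarith [hpi.2])
    · rcases le_total (p d i) (1/2) with h | h
      · exact le_trans (min_le_left _ _) h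
      · exact le_trans (min_le_right _ _) (by linarith)
  have hFs_half : Fstar (1/2) = 1 := by rw [hFstar (1/2), if_pos le_rfl]; ring
  have hFc_mono : Monotone (fun t : ℝ => F (min 1 (max 0 t))) := by
    intro x y hxy
    have hxI : min 1 (max 0 x) ∈ Set.Icc (0:ℝ) 1 :=
      ⟨le_min zero_le_one (le_max_left 0 x), min_le_left _ _⟩
    have hyI : min 1 (max 0 y) ∈ Set.Icc (0:ℝ) 1 :=
      ⟨le_min zero_le_one (le_max_left 0 y), min_le_left _ _⟩
    exact hF_mono hxI hyI (min_le_min le_rfl (max_le_max le_rfl hxy))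
  have hbadF : Set.Countable {x : ℝ | ¬ContinuousAt (fun t : ℝ => F (min 1 (max 0 t))) x} :=
    hFc_mono.countable_not_continuousAt
  have hFcCont : ∀ t ∈ Set.Ioo (0:ℝ) 1, ContinuousAt (fun t : ℝ => F (min 1 (max 0 t))) t →
      ContinuousAt F t := by
    intro t ht hc
    apply hc.congr_of_eventuallyEq
    filter_upwards [Ioo_mem_nhds ht.1 ht.2] with x hx
    show F x = F (min 1 (max 0 x))
    rw [max_eq_right hx.1.le, min_eq_right hx.2.le]
  have hdense1 : ∀ u v : ℝ, 0 ≤ u → v ≤ 1 → u < v →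
      ∃ t, t ∈ Set.Ioo u v ∧ ContinuousAt F t := by
    intro u v hu hv huv
    obtain ⟨t, ht1, ht2⟩ := (hbadF.dense_compl ℝ).exists_mem_open isOpen_Ioo
      (Set.nonempty_Ioo.mpr huv)
    exact ⟨t, ht2, hFcCont t ⟨lt_of_le_of_lt hu ht2.1, lt_of_lt_of_le ht2.2 hv⟩
      (not_not.mp ht1)⟩
  have hdense2 : ∀ u v : ℝ, 0 ≤ u → v ≤ 1/2 → u < v →
      ∃ t, t ∈ Set.Ioo u v ∧ ContinuousAt F t ∧ ContinuousAt F (1-t) := by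
    intro u v hu hv huv
    have hcnt : Set.Countable ({x : ℝ | ¬ContinuousAt (fun t : ℝ => F (min 1 (max 0 t))) x}
        ∪ (fun x : ℝ => 1 - x) '' {x : ℝ | ¬ContinuousAt (fun t : ℝ => F (min 1 (max 0 t))) x}) :=
      hbadF.union (hbadF.image _)
    obtain ⟨t, ht1, ht2⟩ := (hcnt.dense_compl ℝ).exists_mem_open isOpen_Ioo
      (Set.nonempty_Ioo.mpr huv)
    rw [Set.mem_compl_iff, Set.mem_union, not_or] at ht1
    have htI : t ∈ Set.Ioo (0:ℝ) 1 :=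
      ⟨lt_of_le_of_lt hu ht2.1, lt_of_lt_of_le ht2.2 (by linarith)⟩
    refine ⟨t, ht2, hFcCont t htI (not_not.mp ht1.1), ?_⟩
    have h1t : ContinuousAt (fun t : ℝ => F (min 1 (max 0 t))) (1 - t) := by
      by_contra hmem
      exact ht1.2 ⟨1 - t, hmem, by ring⟩
    have h1tI : 1 - t ∈ Set.Ioo (0:ℝ) 1 := ⟨by linarith [htI.2], by linarith [htI.1]⟩
    exact hFcCont _ h1tI h1t
  have hG : ∀ t ∈ Set.Ioo (0:ℝ) 1, ContinuousAt F t →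
      Tendsto (fun d : ℕ => (1/(d:ℝ)) * ∑ i ∈ Finset.range d,
        (if p d i ≤ t then (1:ℝ) else 0)) atTop (nhds (F t)) :=
    fun t ht hc => hstab t ⟨ht.1.le, ht.2.le⟩ hc.continuousWithinAt
  have hGlt := aux_Glt F p hG hdense1
  have hord_mem : ∀ d a, a < d → ord d a < d := hord_lt
  have hNp_ord : ∀ (d : ℕ) (t : ℝ),
      ((Finset.range d).filter (fun j => pstar d (ord d j) ≤ t)).card
        = ((Finset.range d).filter (fun i => pstar d i ≤ t)).card := by
    intro d t
    apply Finset.card_nbij (ord d)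
    · intro a ha
      simp only [Finset.mem_coe, Finset.mem_filter, Finset.mem_range] at ha ⊢
      exact ⟨hord_lt d a ha.1, ha.2⟩
    · refine Set.InjOn.mono ?_ (hord_bij d).injOn
      intro x hx
      simp only [Finset.coe_filter, Set.mem_setOf_eq, Finset.mem_range] at hx
      exact hx.1
    · intro b hb
      simp only [Finset.coe_filter, Set.mem_setOf_eq, Finset.mem_range] at hb
      obtain ⟨a, ha, hab⟩ := (hord_bij d).surjOn (show b ∈ Set.Iio d from hb.1)
      refine ⟨a, ?_, hab⟩
      simp only [Finset.coe_filter, Set.mem_setOf_eq, Finset.mem_range]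
      exact ⟨ha, by rw [hab]; exact hb.2⟩
  have hsorted : ∀ (d : ℕ) (t : ℝ) (j : ℕ), j < d →
      (pstar d (ord d j) ≤ t ↔
        j < ((Finset.range d).filter (fun i => pstar d i ≤ t)).card) := by
    intro d t j hj
    have := aux_sorted_count (fun j => pstar d (ord d j))
      (fun a b hab hb => hord_mono d a b hab hb) t hj
    rwa [hNp_ord d t] at this
  have hNpconv : ∀ t, t ∈ Set.Ioo (0:ℝ) (1/2) → ContinuousAt F t → ContinuousAt F (1-t) →
      Tendsto (fun d : ℕ =>
        ((((Finset.range d).filter (fun i => pstar d i ≤ t)).card : ℝ))/d)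
        atTop (nhds (Fstar t)) := by
    intro t ht hc1 hc2
    have h1 := hG t ⟨ht.1, lt_trans ht.2 (by norm_num)⟩ hc1
    have h2 := hGlt (1-t) ⟨by linarith [ht.2], by linarith [ht.1]⟩ hc2
    have h3 : Tendsto (fun d : ℕ =>
        ((1/(d:ℝ)) * ∑ i ∈ Finset.range d, (if p d i ≤ t then (1:ℝ) else 0)) + 1
          - (1/(d:ℝ)) * ∑ i ∈ Finset.range d, (if p d i < 1 - t then (1:ℝ) else 0))
        atTop (nhds (F t + 1 - F (1-t))) :=
      Tendsto.sub (h1.add tendsto_const_nhds) h2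
    have hFt : Fstar t = F t + 1 - F (1-t) := by rw [hFstar t, if_pos ht.2.le]
    rw [hFt]
    apply h3.congr'
    filter_upwards [eventually_ge_atTop 1] with d hd
    have hd0 : (0:ℝ) < d := by exact_mod_cast hd
    have hsummand : ∀ i ∈ Finset.range d,
        (if pstar d i ≤ t then (1:ℝ) else 0)
          = (if p d i ≤ t then (1:ℝ) else 0)
            + (1 - (if p d i < 1 - t then (1:ℝ) else 0)) := by
      intro i hi
      have hpi := hp d i (Finset.mem_range.mp hi)
      rw [hpstar]
      rcases le_or_gt (p d i) t with h1' | h1'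
      · rw [if_pos (le_trans (min_le_left _ _) h1'), if_pos h1',
          if_pos (show p d i < 1 - t by linarith [ht.2])]
        ring
      · rcases lt_or_ge (p d i) (1 - t) with h2' | h2'
        · rw [if_neg (not_le.mpr (lt_min h1' (by linarith))), if_neg (not_le.mpr h1'),
            if_pos h2']
          ring
        · rw [if_pos (le_trans (min_le_right _ _) (by linarith)), if_neg (not_le.mpr h1'),
            if_neg (not_lt.mpr h2')]
          ring
    have hcard : (∑ i ∈ Finset.range d, if pstar d i ≤ t then (1:ℝ) else 0)
        = ((((Finset.range d).filter (fun i => pstar d i ≤ t)).card : ℝ)) := by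
      rw [Finset.sum_boole]
    have hsub : ∑ i ∈ Finset.range d, ((1:ℝ) - (if p d i < 1 - t then (1:ℝ) else 0))
        = (d:ℝ) - ∑ i ∈ Finset.range d, (if p d i < 1 - t then (1:ℝ) else 0) := by
      rw [Finset.sum_sub_distrib, Finset.sum_const, Finset.card_range, nsmul_eq_mul, mul_one]
    have hL : (1/(d:ℝ)) * (∑ i ∈ Finset.range d, if pstar d i ≤ t then (1:ℝ) else 0)
        = ((1/(d:ℝ)) * ∑ i ∈ Finset.range d, (if p d i ≤ t then (1:ℝ) else 0)) + 1
          - (1/(d:ℝ)) * ∑ i ∈ Finset.range d, (if p d i < 1 - t then (1:ℝ) else 0) := by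
      rw [Finset.sum_congr rfl hsummand, Finset.sum_add_distrib, hsub]
      field_simp
      ring
    rw [← hL, hcard]
    ring
  have hm_lim : Tendsto (fun d : ℕ => ((d - k d : ℕ) : ℝ)/d) atTop (nhds β) := by
    have h1 : Tendsto (fun d : ℕ => 1 - (k d:ℝ)/d) atTop (nhds (1 - α)) :=
      tendsto_const_nhds.sub hk
    rw [hβdef]
    apply h1.congr'
    filter_upwards [hk.eventually (gt_mem_nhds hα.2), eventually_ge_atTop 1] with d hlt hd
    have hd0 : (0:ℝ) < d := by exact_mod_cast hd
    have hkd : k d ≤ d := by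
      by_contra hcon
      push_neg at hcon
      have hdk : (d:ℝ) < k d := by exact_mod_cast hcon
      have : (1:ℝ) < (k d:ℝ)/d := by rw [lt_div_iff₀ hd0]; linarith
      linarith
    rw [Nat.cast_sub hkd]
    field_simp
  have hQd : ∀ q, q ∈ Set.Ioo (0:ℝ) β → (∀ t, Qstar q < t → t ≤ 1 → q < Fstar t) →
      Tendsto (fun d : ℕ => pstar d (ord d ⌊q * d⌋₊)) atTop (nhds (Qstar q)) := by
    intro q hqI hgood
    have hq0 : 0 < q := hqI.1
    have hq1 : q < 1 := lt_trans hqI.2 hβ1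
    have hSne : (1/2:ℝ) ∈ {t | t ∈ Set.Icc (0:ℝ) 1 ∧ q ≤ Fstar t} :=
      ⟨⟨by norm_num, by norm_num⟩, by rw [hFs_half]; exact hq1.le⟩
    have hSbdd : BddBelow {t | t ∈ Set.Icc (0:ℝ) 1 ∧ q ≤ Fstar t} :=
      ⟨0, fun x hx => hx.1.1⟩
    have hQ0 : 0 ≤ Qstar q := by rw [hQ]; exact le_csInf ⟨_, hSne⟩ (fun x hx => hx.1.1)
    have hQhalf : Qstar q ≤ 1/2 := by rw [hQ]; exact csInf_le hSbdd hSne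
    have hfloor_lt : ∀ d : ℕ, 1 ≤ d → ⌊q * d⌋₊ < d := by
      intro d hd
      have hd0 : (0:ℝ) < d := by exact_mod_cast hd
      have hqd : q * d < d := by nlinarith
      have h2 : (⌊q * d⌋₊:ℝ) ≤ q * d := Nat.floor_le (mul_nonneg hq0.le (Nat.cast_nonneg d))
      exact_mod_cast lt_of_le_of_lt h2 hqd
    rw [tendsto_order]
    constructor
    · intro l hl
      rcases lt_or_ge l 0 with hl0 | hl0
      · filter_upwards [eventually_ge_atTop 1] with d hd
        exact lt_of_lt_of_le hl0 (hps_mem d _ (hord_lt d _ (hfloor_lt d hd))).1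
      · have hQpos : 0 < Qstar q := lt_of_le_of_lt hl0 hl
        obtain ⟨t, htmem, hc1, hc2⟩ := hdense2 (max l 0) (Qstar q) (le_max_right _ _)
          hQhalf (max_lt hl hQpos)
        have ht0 : 0 < t := lt_of_le_of_lt (le_max_right l 0) htmem.1
        have hthalf : t < 1/2 := lt_of_lt_of_le htmem.2 hQhalf
        have hFst : Fstar t < q := by
          by_contra hge
          push_neg at hge
          have : Qstar q ≤ t := by
            rw [hQ]
            exact csInf_le hSbdd ⟨⟨ht0.le, by linarith⟩, hge⟩
          linarith [htmem.2]
        have hconv := hNpconv t ⟨ht0, hthalf⟩ hc1 hc2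
        have hδ : 0 < (q - Fstar t)/2 := by linarith
        have hev2 : ∀ᶠ d : ℕ in atTop, 1 ≤ ((q - Fstar t)/2) * d :=
          ((tendsto_natCast_atTop_atTop).const_mul_atTop hδ).eventually_ge_atTop 1
        filter_upwards [hconv.eventually (gt_mem_nhds
            (show Fstar t < q - (q - Fstar t)/2 by linarith)),
          hev2, eventually_ge_atTop 1] with d h1 h2 hd1
        have hd0 : (0:ℝ) < d := by exact_mod_cast hd1
        rw [div_lt_iff₀ hd0] at h1
        have hNlt : ((((Finset.range d).filter (fun i => pstar d i ≤ t)).card : ℝ))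
            < q * d - 1 := by nlinarith
        have hnot : ¬ (⌊q * d⌋₊
            < ((Finset.range d).filter (fun i => pstar d i ≤ t)).card) := by
          intro hcon
          have h3 : (⌊q * d⌋₊:ℝ)
              < ((((Finset.range d).filter (fun i => pstar d i ≤ t)).card : ℝ)) := by
            exact_mod_cast hcon
          have h4 : q * d - 1 < (⌊q * d⌋₊ : ℝ) := Nat.sub_one_lt_floor _
          linarith
        have hiff := hsorted d t _ (hfloor_lt d hd1)
        have hgt : t < pstar d (ord d ⌊q * d⌋₊) := by
          by_contra hle
          push_neg at hle
          exact hnot (hiff.mp hle)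
        exact lt_trans (lt_of_le_of_lt (le_max_left l 0) htmem.1) hgt
    · intro u hu
      rcases le_or_gt u (1/2) with hu2 | hu2
      · obtain ⟨t, htmem, hc1, hc2⟩ := hdense2 (Qstar q) u hQ0 hu2 hu
        have hFst : q < Fstar t := hgood t htmem.1 (by linarith [htmem.2])
        have hconv := hNpconv t ⟨lt_of_le_of_lt hQ0 htmem.1, lt_of_lt_of_le htmem.2 hu2⟩ hc1 hc2
        filter_upwards [hconv.eventually (lt_mem_nhds hFst), eventually_ge_atTop 1]
          with d h1 hd1
        have hd0 : (0:ℝ) < d := by exact_mod_cast hd1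
        rw [lt_div_iff₀ hd0] at h1
        have hflN : ⌊q * d⌋₊ < ((Finset.range d).filter (fun i => pstar d i ≤ t)).card := by
          have h3 : (⌊q * d⌋₊:ℝ) ≤ q * d := Nat.floor_le (mul_nonneg hq0.le (Nat.cast_nonneg d))
          exact_mod_cast lt_of_le_of_lt h3 h1
        have := (hsorted d t _ (hfloor_lt d hd1)).mpr hflN
        exact lt_of_le_of_lt this htmem.2
      · filter_upwards [eventually_ge_atTop 1] with d hd
        exact lt_of_le_of_lt (hps_mem d _ (hord_lt d _ (hfloor_lt d hd))).2 hu2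
  have hkey : Tendsto (fun d : ℕ => ∫ q : ℝ, (∑ j ∈ Finset.range (d - k d),
      Set.indicator (Set.Ico ((j:ℝ)/d) (((j:ℝ)+1)/d))
        (fun _ => pstar d (ord d j) * (1 - pstar d (ord d j))) q))
      atTop (nhds (∫ q : ℝ, Set.indicator (Set.Ioo (0:ℝ) β)
        (fun q => Qstar q * (1 - Qstar q)) q)) := by
    apply tendsto_integral_of_dominated_convergence
      (bound := Set.indicator (Set.Icc (0:ℝ) 1) (fun _ => (1:ℝ)))
    · exact fun d => (aux_psi_meas _).aestronglyMeasurable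
    · rw [integrable_indicator_iff measurableSet_Icc]
      exact integrableOn_const (by rw [Real.volume_Icc]; exact ENNReal.ofReal_ne_top)
    · intro d
      apply ae_of_all
      intro q
      rcases Nat.eq_zero_or_pos d with hd0 | hd0
      · rw [hd0]
        simp only [Nat.zero_sub, Finset.range_zero, Finset.sum_empty, norm_zero]
        exact Set.indicator_nonneg (fun _ _ => zero_le_one) q
      · rw [aux_psi hd0 (Nat.sub_le d (k d))]
        by_cases hcond : 0 ≤ q ∧ ⌊q * d⌋₊ < d - k d
        · rw [if_pos hcond]
          have hfd : ⌊q * d⌋₊ < d := lt_of_lt_of_le hcond.2 (Nat.sub_le _ _)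
          have hpsi := hps_mem d _ (hord_lt d _ hfd)
          have hq1 : q ≤ 1 := by
            by_contra hq1
            push_neg at hq1
            have hdd : (0:ℝ) < d := by exact_mod_cast hd0
            have h5 : (d:ℝ) ≤ q * d := by nlinarith
            have h6 : d ≤ ⌊q * d⌋₊ := Nat.le_floor h5
            omega
          rw [Set.indicator_of_mem (Set.mem_Icc.mpr ⟨hcond.1, hq1⟩)]
          rw [Real.norm_eq_abs, abs_le]
          constructor <;> nlinarith [hpsi.1, hpsi.2]
        · rw [if_neg hcond, norm_zero]
          exact Set.indicator_nonneg (fun _ _ => zero_le_one) q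
    · have hbadq := aux_bad_countable Fstar Qstar hFstar_mono hFs_half hQ β hβ1
      have hNull : volume ({q | q ∈ Set.Ioo (0:ℝ) β ∧ ∃ t, Qstar q < t ∧ t ≤ 1 ∧ Fstar t ≤ q}
          ∪ {0, β} : Set ℝ) = 0 :=
        Set.Countable.measure_zero
          (hbadq.union ((Set.countable_singleton β).insert 0)) _
      rw [ae_iff]
      refine measure_mono_null ?_ hNull
      intro q hq
      simp only [Set.mem_setOf_eq] at hq
      by_contra hqn
      apply hq
      simp only [Set.mem_union, Set.mem_insert_iff, Set.mem_singleton_iff, not_or,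
        Set.mem_setOf_eq] at hqn
      obtain ⟨hqB, hq0', hqβ'⟩ := hqn
      rcases lt_trichotomy q 0 with hq0 | hq0 | hq0
      · have hz : (fun d : ℕ => (∑ j ∈ Finset.range (d - k d),
            Set.indicator (Set.Ico ((j:ℝ)/d) (((j:ℝ)+1)/d))
              (fun _ => pstar d (ord d j) * (1 - pstar d (ord d j))) q)) = fun _ => 0 := by
          funext d
          apply Finset.sum_eq_zero
          intro j hj
          apply Set.indicator_of_notMem
          intro hmem
          exact absurd hmem.1 (not_le.mpr (lt_of_lt_of_le hq0 (by positivity)))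
        rw [hz, Set.indicator_of_notMem
          (fun hmem => absurd hmem.1 (lt_asymm hq0) : q ∉ Set.Ioo (0:ℝ) β)]
        exact tendsto_const_nhds
      · exact absurd hq0 hq0'
      · rcases lt_trichotomy q β with hqβ | hqβ | hqβ
        · have hgood : ∀ t, Qstar q < t → t ≤ 1 → q < Fstar t := by
            intro t h1 h2
            by_contra hcon
            push_neg at hcon
            exact hqB ⟨⟨hq0, hqβ⟩, t, h1, h2, hcon⟩
          have hT := hQd q ⟨hq0, hqβ⟩ hgood
          rw [Set.indicator_of_mem (Set.mem_Ioo.mpr ⟨hq0, hqβ⟩)]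
          have hgc : Continuous (fun t : ℝ => t * (1 - t)) :=
            continuous_id.mul (continuous_const.sub continuous_id)
          have hT2 : Tendsto (fun d : ℕ =>
              pstar d (ord d ⌊q * d⌋₊) * (1 - pstar d (ord d ⌊q * d⌋₊)))
              atTop (nhds (Qstar q * (1 - Qstar q))) := by
            have := (hgc.tendsto (Qstar q)).comp hT
            exact this
          apply hT2.congr'
          filter_upwards [hm_lim.eventually (lt_mem_nhds hqβ), eventually_ge_atTop 1]
            with d h1 hd1
          have hd0 : (0:ℝ) < d := by exact_mod_cast hd1
          rw [lt_div_iff₀ hd0] at h1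
          have hfm : ⌊q * d⌋₊ < d - k d := by
            have h3 : (⌊q * d⌋₊ : ℝ) ≤ q * d := Nat.floor_le (mul_nonneg hq0.le (Nat.cast_nonneg d))
            exact_mod_cast lt_of_le_of_lt h3 h1
          rw [aux_psi hd1 (Nat.sub_le d (k d)), if_pos ⟨hq0.le, hfm⟩]
        · exact absurd hqβ hqβ'
        · rw [Set.indicator_of_notMem
            (fun hmem => absurd hmem.2 (lt_asymm hqβ) : q ∉ Set.Ioo (0:ℝ) β)]
          rcases le_or_gt 1 q with hq1 | hq1
          · have hz : (fun d : ℕ => (∑ j ∈ Finset.range (d - k d),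
                Set.indicator (Set.Ico ((j:ℝ)/d) (((j:ℝ)+1)/d))
                  (fun _ => pstar d (ord d j) * (1 - pstar d (ord d j))) q)) = fun _ => 0 := by
              funext d
              apply Finset.sum_eq_zero
              intro j hj
              apply Set.indicator_of_notMem
              rintro ⟨h1, h2⟩
              have hjd : j < d := lt_of_lt_of_le (Finset.mem_range.mp hj) (Nat.sub_le _ _)
              have hd0 : (0:ℝ) < d := by exact_mod_cast Nat.zero_lt_of_lt hjd
              have h3 : ((j:ℝ)+1)/d ≤ 1 := by
                rw [div_le_one hd0]
                exact_mod_cast Nat.succ_le_of_lt hjd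
              linarith
            rw [hz]
            exact tendsto_const_nhds
          · have hδ : 0 < (q - β)/2 := by linarith
            have hev2 : ∀ᶠ d : ℕ in atTop, 1 ≤ ((q - β)/2) * d :=
              ((tendsto_natCast_atTop_atTop).const_mul_atTop hδ).eventually_ge_atTop 1
            apply Filter.Tendsto.congr' _ tendsto_const_nhds
            filter_upwards [hm_lim.eventually (gt_mem_nhds
                (show β < q - (q - β)/2 by linarith)), hev2, eventually_ge_atTop 1]
              with d h1 h2 hd1
            have hd0 : (0:ℝ) < d := by exact_mod_cast hd1
            rw [div_lt_iff₀ hd0] at h1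
            have hmle : ((d - k d : ℕ):ℝ) < q * d - 1 := by nlinarith
            have hcond : ¬ (0 ≤ q ∧ ⌊q * d⌋₊ < d - k d) := by
              rintro ⟨-, hlt⟩
              have h3 : (⌊q * d⌋₊ : ℝ) < ((d - k d : ℕ):ℝ) := by exact_mod_cast hlt
              have h4 : q * d - 1 < (⌊q * d⌋₊ : ℝ) := Nat.sub_one_lt_floor _
              linarith
            rw [aux_psi hd1 (Nat.sub_le d (k d)), if_neg hcond]
  have hfinal : (∫ q : ℝ, Set.indicator (Set.Ioo (0:ℝ) β)
      (fun q => Qstar q * (1 - Qstar q)) q)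
      = ∫ q in (0:ℝ)..β, Qstar q * (1 - Qstar q) := by
    rw [integral_indicator measurableSet_Ioo,
      intervalIntegral.integral_of_le hβ0.le, MeasureTheory.integral_Ioc_eq_integral_Ioo]
  rw [← hfinal]
  apply hkey.congr'
  filter_upwards [eventually_ge_atTop 1] with d hd
  exact aux_psi_integral hd (Nat.sub_le d (k d)) _
end

section
/- Under the stability assumption, for any fixed β ∈ (0,1), the asymptotic normalized risk of fixed surprise highlighting for a sophisticated agent, namely E[(1/d) Σ_{j=⌊βd⌋+1}^{d} (X*_{d,(j)} − p*_{d,(j)})²] = (1/d) Σ_{j=⌊βd⌋+1}^{d} p*_{d,(j)}(1 − p*_{d,(j)}), converges as d → ∞ to ∫_β^1 Q*(q)(1 − Q*(q)) dq. -/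
/-!
Statement 4: Under the stability assumption, for any fixed `β ∈ (0,1)`, the
asymptotic normalized risk of fixed surprise highlighting for a sophisticated
agent, namely
`E[(1/d) Σ_{j=⌊βd⌋+1}^{d} (X*_{d,(j)} − p*_{d,(j)})²]
  = (1/d) Σ_{j=⌊βd⌋+1}^{d} p*_{d,(j)}(1 − p*_{d,(j)})`,
converges as `d → ∞` to `∫_β^1 Q*(q)(1 − Q*(q)) dq`.
-/

open Finset MeasureTheory ProbabilityTheory Filter Topology


lemma hlp_floor_tendsto {q : ℝ} (hq : 0 ≤ q) :
    Tendsto (fun d : ℕ => ((⌊q * d⌋₊ : ℝ) + 1) / d) atTop (𝓝 q) := by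
  have h1 : Tendsto (fun d : ℕ => q + 1 / (d : ℝ)) atTop (𝓝 q) := by
    simpa using (tendsto_const_nhds (x := q)).add tendsto_one_div_atTop_nhds_zero_nat
  refine tendsto_of_tendsto_of_tendsto_of_le_of_le' (tendsto_const_nhds (x := q)) h1 ?_ ?_
  · filter_upwards [eventually_ge_atTop 1] with d hd
    have hd0 : (0:ℝ) < d := by exact_mod_cast hd
    have h2 : q * d < (⌊q * d⌋₊ : ℝ) + 1 := Nat.lt_floor_add_one _
    rw [le_div_iff₀ hd0]
    nlinarith
  · filter_upwards [eventually_ge_atTop 1] with d hd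
    have hd0 : (0:ℝ) < d := by exact_mod_cast hd
    have h2 : (⌊q * d⌋₊ : ℝ) ≤ q * d := Nat.floor_le (by positivity)
    rw [div_le_iff₀ hd0]
    have : q * d + 1 ≤ (q + 1/d) * d := by field_simp; exact le_rfl
    linarith

lemma hlp_orderstat {d : ℕ} {a : ℕ → ℝ}
    (hmono : ∀ j j', j ≤ j' → j' < d → a j ≤ a j') {j : ℕ} (hj : j < d) (t : ℝ) :
    a j ≤ t ↔ ((j : ℝ) + 1) ≤ ∑ k ∈ range d, (if a k ≤ t then (1:ℝ) else 0) := by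
  constructor
  · intro h
    calc ((j:ℝ) + 1) = ∑ k ∈ range (j+1), (1:ℝ) := by simp
      _ = ∑ k ∈ range (j+1), (if a k ≤ t then (1:ℝ) else 0) := by
          refine Finset.sum_congr rfl fun k hk => ?_
          rw [if_pos (le_trans (hmono k j (Nat.lt_succ_iff.mp (mem_range.mp hk)) hj) h)]
      _ ≤ ∑ k ∈ range d, (if a k ≤ t then (1:ℝ) else 0) := by
          refine Finset.sum_le_sum_of_subset_of_nonneg (range_subset_range.mpr hj) fun k _ _ => ?_
          positivity
  · intro h
    by_contra hnot
    push_neg at hnot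
    have h1 : ∑ k ∈ range d, (if a k ≤ t then (1:ℝ) else 0)
        ≤ ∑ k ∈ range d, (if k < j then (1:ℝ) else 0) := by
      refine Finset.sum_le_sum fun k hk => ?_
      by_cases hk2 : k < j
      · rw [if_pos hk2]; split_ifs <;> norm_num
      · rw [if_neg hk2]
        have : a j ≤ a k := hmono j k (le_of_not_gt hk2) (mem_range.mp hk)
        rw [if_neg (by linarith)]
    have h2 : ∑ k ∈ range d, (if k < j then (1:ℝ) else 0) ≤ (j:ℝ) := by
      rw [Finset.sum_boole]
      have : (range d).filter (· < j) ⊆ range j := fun k hk =>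
        mem_range.mpr (mem_filter.mp hk).2
      have := Finset.card_le_card this
      rw [Finset.card_range] at this
      exact_mod_cast this
    linarith

lemma hlp_bij_sum {d : ℕ} {f : ℕ → ℕ} (hbij : Set.BijOn f (Set.Iio d) (Set.Iio d)) (g : ℕ → ℝ) :
    ∑ j ∈ range d, g (f j) = ∑ i ∈ range d, g i := by
  refine Finset.sum_bij (fun j _ => f j) ?_ ?_ ?_ ?_
  · intro a ha
    exact mem_range.mpr (hbij.mapsTo (mem_range.mp ha))
  · intro a1 h1 a2 h2 he
    exact hbij.injOn (mem_range.mp h1) (mem_range.mp h2) he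
  · intro b hb
    obtain ⟨a, ha, hfa⟩ := hbij.surjOn (mem_range.mp hb)
    exact ⟨a, mem_range.mpr ha, hfa⟩
  · intro a ha; rfl


lemma hlp_cont {F Fs : ℝ → ℝ} (hm : MonotoneOn F (Set.Icc 0 1))
    (hFs : ∀ s : ℝ, s ≤ 1/2 → Fs s = F s + 1 - F (1-s))
    (hc : ContinuousOn Fs (Set.Icc 0 1)) :
    ∀ t ∈ Set.Ioo (0:ℝ) 1, t ≠ 1/2 → ContinuousAt F t := by
  intro t ht hne
  obtain ⟨ht1, ht2⟩ := ht
  rcases lt_or_gt_of_ne hne with h | h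
  · -- t < 1/2
    have hcs : ContinuousAt Fs t :=
      (hc t ⟨ht1.le, ht2.le⟩).continuousAt (Icc_mem_nhds ht1 ht2)
    rw [Metric.continuousAt_iff] at hcs ⊢
    intro ε hε
    obtain ⟨δ, hδ, hδ'⟩ := hcs ε hε
    refine ⟨min δ (min t (1/2 - t)), lt_min hδ (lt_min ht1 (by linarith)), ?_⟩
    intro s hs
    rw [Real.dist_eq] at hs
    have hs1 : |s - t| < δ := lt_of_lt_of_le hs (min_le_left _ _)
    have hs2 : |s - t| < t := lt_of_lt_of_le hs (le_trans (min_le_right _ _) (min_le_left _ _))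
    have hs3 : |s - t| < 1/2 - t := lt_of_lt_of_le hs (le_trans (min_le_right _ _) (min_le_right _ _))
    rw [abs_lt] at hs2 hs3
    have h0s : 0 < s := by linarith
    have hs12 : s < 1/2 := by linarith
    have key : |F s - F t| ≤ |Fs s - Fs t| := by
      rw [hFs s hs12.le, hFs t h.le]
      have hmem1 : s ∈ Set.Icc (0:ℝ) 1 := ⟨h0s.le, by linarith⟩
      have hmem2 : t ∈ Set.Icc (0:ℝ) 1 := ⟨ht1.le, ht2.le⟩
      have hmem3 : (1-s) ∈ Set.Icc (0:ℝ) 1 := ⟨by linarith, by linarith⟩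
      have hmem4 : (1-t) ∈ Set.Icc (0:ℝ) 1 := ⟨by linarith, by linarith⟩
      rcases le_total s t with hst | hst
      · have h1 : F s ≤ F t := hm hmem1 hmem2 hst
        have h2 : F (1-t) ≤ F (1-s) := hm hmem4 hmem3 (by linarith)
        rw [abs_sub_comm, abs_of_nonneg (by linarith), abs_sub_comm,
          abs_of_nonneg (by linarith)]
        linarith
      · have h1 : F t ≤ F s := hm hmem2 hmem1 hst
        have h2 : F (1-s) ≤ F (1-t) := hm hmem3 hmem4 (by linarith)
        rw [abs_of_nonneg (by linarith), abs_of_nonneg (by linarith)]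
        linarith
    calc dist (F s) (F t) = |F s - F t| := Real.dist_eq _ _
      _ ≤ |Fs s - Fs t| := key
      _ = dist (Fs s) (Fs t) := (Real.dist_eq _ _).symm
      _ < ε := hδ' (by rw [Real.dist_eq]; exact hs1)
  · -- t > 1/2
    have hu : (1 - t) ∈ Set.Ioo (0:ℝ) 1 := ⟨by linarith, by linarith⟩
    have hcs : ContinuousAt Fs (1 - t) :=
      (hc _ ⟨hu.1.le, hu.2.le⟩).continuousAt (Icc_mem_nhds hu.1 hu.2)
    rw [Metric.continuousAt_iff] at hcs ⊢
    intro ε hε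
    obtain ⟨δ, hδ, hδ'⟩ := hcs ε hε
    refine ⟨min δ (min (t - 1/2) (1 - t)), lt_min hδ (lt_min (by linarith) (by linarith)), ?_⟩
    intro s hs
    rw [Real.dist_eq] at hs
    have hs1 : |s - t| < δ := lt_of_lt_of_le hs (min_le_left _ _)
    have hs2 : |s - t| < t - 1/2 := lt_of_lt_of_le hs (le_trans (min_le_right _ _) (min_le_left _ _))
    have hs3 : |s - t| < 1 - t := lt_of_lt_of_le hs (le_trans (min_le_right _ _) (min_le_right _ _))
    rw [abs_lt] at hs2 hs3
    have hs12 : 1/2 < s := by linarith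
    have hs11 : s < 1 := by linarith
    have key : |F s - F t| ≤ |Fs (1-s) - Fs (1-t)| := by
      rw [hFs (1-s) (by linarith), hFs (1-t) (by linarith)]
      have hmem1 : s ∈ Set.Icc (0:ℝ) 1 := ⟨by linarith, hs11.le⟩
      have hmem2 : t ∈ Set.Icc (0:ℝ) 1 := ⟨ht1.le, ht2.le⟩
      have hmem3 : (1-s) ∈ Set.Icc (0:ℝ) 1 := ⟨by linarith, by linarith⟩
      have hmem4 : (1-t) ∈ Set.Icc (0:ℝ) 1 := ⟨by linarith, by linarith⟩
      have hsimp1 : (1 - (1-s)) = s := by ring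
      have hsimp2 : (1 - (1-t)) = t := by ring
      rw [hsimp1, hsimp2]
      rcases le_total s t with hst | hst
      · have h1 : F s ≤ F t := hm hmem1 hmem2 hst
        have h2 : F (1-t) ≤ F (1-s) := hm hmem4 hmem3 (by linarith)
        rw [abs_sub_comm, abs_of_nonneg (by linarith), abs_of_nonneg (by linarith)]
        linarith
      · have h1 : F t ≤ F s := hm hmem2 hmem1 hst
        have h2 : F (1-s) ≤ F (1-t) := hm hmem3 hmem4 (by linarith)
        rw [abs_of_nonneg (by linarith), abs_sub_comm, abs_of_nonneg (by linarith)]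
        linarith
    calc dist (F s) (F t) = |F s - F t| := Real.dist_eq _ _
      _ ≤ |Fs (1-s) - Fs (1-t)| := key
      _ = dist (Fs (1-s)) (Fs (1-t)) := (Real.dist_eq _ _).symm
      _ < ε := hδ' (by rw [Real.dist_eq]; rw [show (1-s) - (1-t) = -(s-t) by ring, abs_neg]; exact hs1)


lemma hlp_bern {Ω : Type*} [MeasurableSpace Ω] (μ : Measure Ω) [IsProbabilityMeasure μ]
    (X : Ω → ℝ) (hm : Measurable X) (hv : ∀ ω, X ω = 0 ∨ X ω = 1)
    (pp : ℝ) (hp0 : 0 ≤ pp) (hb : μ {ω | X ω = 1} = ENNReal.ofReal pp) :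
    Integrable X μ ∧ ∫ ω, X ω ∂μ = pp := by
  have hA : MeasurableSet {ω | X ω = 1} := hm (measurableSet_singleton 1)
  have hXi : X = Set.indicator {ω | X ω = 1} (fun _ => (1:ℝ)) := by
    funext ω
    rcases hv ω with h | h
    · rw [h, Set.indicator_of_notMem]
      simp only [Set.mem_setOf_eq, h]
      norm_num
    · rw [h, Set.indicator_of_mem]
      exact h
  constructor
  · rw [hXi]
    exact (integrable_const (1:ℝ)).indicator hA
  · rw [hXi, integral_indicator_const _ hA, measureReal_def, hb, smul_eq_mul, mul_one,
      ENNReal.toReal_ofReal hp0]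

lemma hlp_bern_sq {Ω : Type*} [MeasurableSpace Ω] (μ : Measure Ω) [IsProbabilityMeasure μ]
    (X : Ω → ℝ) (hm : Measurable X) (hv : ∀ ω, X ω = 0 ∨ X ω = 1)
    (pp : ℝ) (hp0 : 0 ≤ pp) (hb : μ {ω | X ω = 1} = ENNReal.ofReal pp) :
    Integrable (fun ω => ((if pp ≤ 1/2 then X ω else 1 - X ω) - min pp (1 - pp))^2) μ ∧
    ∫ ω, ((if pp ≤ 1/2 then X ω else 1 - X ω) - min pp (1 - pp))^2 ∂μ
      = min pp (1 - pp) * (1 - min pp (1 - pp)) := by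
  obtain ⟨hint, hXint⟩ := hlp_bern μ X hm hv pp hp0 hb
  have hptw : (fun ω => ((if pp ≤ 1/2 then X ω else 1 - X ω) - min pp (1 - pp))^2)
      = fun ω => (1 - 2*pp) * X ω + pp^2 := by
    funext ω
    have hmin : min pp (1 - pp) = if pp ≤ 1/2 then pp else 1 - pp := by
      rcases le_or_gt pp (1/2) with hc | hc
      · rw [if_pos hc, min_eq_left (by linarith)]
      · rw [if_neg (not_le.mpr hc), min_eq_right (by linarith)]
    rw [hmin]
    rcases hv ω with h | h <;> rw [h] <;> split_ifs <;> ring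
  have hval : min pp (1 - pp) * (1 - min pp (1 - pp)) = pp * (1 - pp) := by
    rcases le_total pp (1 - pp) with hc | hc
    · rw [min_eq_left hc]
    · rw [min_eq_right hc]; ring
  rw [hptw, hval]
  constructor
  · exact (hint.const_mul _).add (integrable_const _)
  · rw [integral_add (hint.const_mul _) (integrable_const _), integral_const_mul, hXint,
      integral_const, measureReal_def, measure_univ, ENNReal.toReal_one, smul_eq_mul, one_mul]
    ring


lemma hlp_strict_lt (p : ℕ → ℕ → ℝ) (F : ℝ → ℝ)
    (hstab' : ∀ t ∈ Set.Ioo (0:ℝ) 1, t ≠ 1/2 → Tendsto (fun d : ℕ =>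
      (1/(d:ℝ)) * ∑ i ∈ range d, (if p d i ≤ t then (1:ℝ) else 0)) atTop (𝓝 (F t)))
    (hFc : ∀ t ∈ Set.Ioo (0:ℝ) 1, t ≠ 1/2 → ContinuousAt F t)
    (u : ℝ) (hu : u ∈ Set.Ioo (1/2 : ℝ) 1) :
    Tendsto (fun d : ℕ =>
      (1/(d:ℝ)) * ∑ i ∈ range d, (if p d i < u then (1:ℝ) else 0)) atTop (𝓝 (F u)) := by
  obtain ⟨hu1, hu2⟩ := hu
  rw [Metric.tendsto_atTop]
  intro ε hε
  have hcu : ContinuousAt F u := hFc u ⟨by linarith, hu2⟩ (by intro h; rw [h] at hu1; linarith)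
  rw [Metric.continuousAt_iff] at hcu
  obtain ⟨δ, hδ, hδ'⟩ := hcu (ε/2) (by linarith)
  have hex : ∃ s : ℝ, 1/2 < s ∧ s < u ∧ |F s - F u| < ε/2 := by
    refine ⟨u - min (δ/2) ((u - 1/2)/2), ?_, ?_, ?_⟩
    · have := min_le_right (δ/2) ((u - 1/2)/2); linarith
    · have := lt_min (show (0:ℝ) < δ/2 by linarith) (show (0:ℝ) < (u-1/2)/2 by linarith)
      linarith
    · have h1 := min_le_left (δ/2) ((u - 1/2)/2)
      have h2 := lt_min (show (0:ℝ) < δ/2 by linarith) (show (0:ℝ) < (u-1/2)/2 by linarith)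
      have : dist (u - min (δ/2) ((u - 1/2)/2)) u < δ := by
        rw [Real.dist_eq, show u - min (δ/2) ((u - 1/2)/2) - u = -(min (δ/2) ((u - 1/2)/2)) by ring,
          abs_neg, abs_of_nonneg (by linarith)]
        linarith
      have := hδ' this
      rwa [Real.dist_eq] at this
  obtain ⟨s, hs1, hsu, hFs⟩ := hex
  have hA := hstab' s ⟨by linarith, by linarith⟩ (by intro h; rw [h] at hs1; linarith)
  have hB := hstab' u ⟨by linarith, hu2⟩ (by intro h; rw [h] at hu1; linarith)
  rw [Metric.tendsto_atTop] at hA hB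
  obtain ⟨N1, hN1⟩ := hA (ε/2) (by linarith)
  obtain ⟨N2, hN2⟩ := hB (ε/2) (by linarith)
  refine ⟨max N1 N2, fun d hd => ?_⟩
  have h1 := hN1 d (le_trans (le_max_left _ _) hd)
  have h2 := hN2 d (le_trans (le_max_right _ _) hd)
  rw [Real.dist_eq] at h1 h2 ⊢
  have hd0 : (0:ℝ) ≤ 1/(d:ℝ) := by positivity
  have hAx : (1/(d:ℝ)) * ∑ i ∈ range d, (if p d i ≤ s then (1:ℝ) else 0)
      ≤ (1/(d:ℝ)) * ∑ i ∈ range d, (if p d i < u then (1:ℝ) else 0) := by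
    refine mul_le_mul_of_nonneg_left (Finset.sum_le_sum fun i _ => ?_) hd0
    split_ifs with hc1 hc2 <;> try norm_num
    exact absurd (lt_of_le_of_lt hc1 hsu) hc2
  have hxB : (1/(d:ℝ)) * ∑ i ∈ range d, (if p d i < u then (1:ℝ) else 0)
      ≤ (1/(d:ℝ)) * ∑ i ∈ range d, (if p d i ≤ u then (1:ℝ) else 0) := by
    refine mul_le_mul_of_nonneg_left (Finset.sum_le_sum fun i _ => ?_) hd0
    split_ifs with hc1 hc2 <;> try norm_num
    exact absurd hc1.le hc2
  rw [abs_lt] at h1 h2 ⊢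
  rw [abs_lt] at hFs
  constructor <;> nlinarith [hAx, hxB]

lemma hlp_ecdf (p : ℕ → ℕ → ℝ) (F : ℝ → ℝ)
    (hstab' : ∀ t ∈ Set.Ioo (0:ℝ) 1, t ≠ 1/2 → Tendsto (fun d : ℕ =>
      (1/(d:ℝ)) * ∑ i ∈ range d, (if p d i ≤ t then (1:ℝ) else 0)) atTop (𝓝 (F t)))
    (hFc : ∀ t ∈ Set.Ioo (0:ℝ) 1, t ≠ 1/2 → ContinuousAt F t)
    (t : ℝ) (ht : t ∈ Set.Ioo (0:ℝ) (1/2)) :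
    Tendsto (fun d : ℕ => (1/(d:ℝ)) * ∑ i ∈ range d,
      (if min (p d i) (1 - p d i) ≤ t then (1:ℝ) else 0)) atTop (𝓝 (F t + (1 - F (1-t)))) := by
  obtain ⟨ht1, ht2⟩ := ht
  have hkey : ∀ P : ℝ, (if min P (1-P) ≤ t then (1:ℝ) else 0)
      = (if P ≤ t then (1:ℝ) else 0) + (1 - (if P < 1-t then (1:ℝ) else 0)) := by
    intro P
    by_cases h2 : P ≤ t
    · rw [if_pos (min_le_iff.mpr (Or.inl h2)), if_pos h2, if_pos (by linarith : P < 1-t)]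
      ring
    · by_cases h3 : 1 - P ≤ t
      · rw [if_pos (min_le_iff.mpr (Or.inr h3)), if_neg h2,
          if_neg (by push_neg at h2 ⊢; linarith : ¬ P < 1-t)]
        ring
      · rw [if_neg (fun hmin => (min_le_iff.mp hmin).elim h2 h3), if_neg h2,
          if_pos (by push_neg at h3; linarith : P < 1-t)]
        ring
  have hlim : Tendsto (fun d : ℕ =>
      (1/(d:ℝ)) * ∑ i ∈ range d, (if p d i ≤ t then (1:ℝ) else 0)
      + (1 - (1/(d:ℝ)) * ∑ i ∈ range d, (if p d i < 1-t then (1:ℝ) else 0)))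
      atTop (𝓝 (F t + (1 - F (1-t)))) := by
    exact (hstab' t ⟨ht1, by linarith⟩ (by intro h; rw [h] at ht2; linarith)).add
      (tendsto_const_nhds.sub
        (hlp_strict_lt p F hstab' hFc (1-t) ⟨by linarith, by linarith⟩))
  refine hlim.congr' ?_
  filter_upwards [eventually_ge_atTop 1] with d hd
  have hd0 : (d:ℝ) ≠ 0 := by positivity
  have hsum : ∑ i ∈ range d, (if min (p d i) (1 - p d i) ≤ t then (1:ℝ) else 0)
      = ∑ i ∈ range d, (if p d i ≤ t then (1:ℝ) else 0)
        + ((d:ℝ) - ∑ i ∈ range d, (if p d i < 1-t then (1:ℝ) else 0)) := by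
    calc ∑ i ∈ range d, (if min (p d i) (1 - p d i) ≤ t then (1:ℝ) else 0)
        = ∑ i ∈ range d, ((if p d i ≤ t then (1:ℝ) else 0)
            + (1 - (if p d i < 1-t then (1:ℝ) else 0))) :=
          Finset.sum_congr rfl fun i _ => hkey (p d i)
      _ = ∑ i ∈ range d, (if p d i ≤ t then (1:ℝ) else 0)
            + ∑ i ∈ range d, (1 - (if p d i < 1-t then (1:ℝ) else 0)) :=
          Finset.sum_add_distrib
      _ = _ := by
          rw [Finset.sum_sub_distrib, Finset.sum_const, Finset.card_range, nsmul_eq_mul, mul_one]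
  rw [hsum]
  field_simp

lemma hlp_quant (a : ℕ → ℕ → ℝ)
    (ha_mono : ∀ d j j', j ≤ j' → j' < d → a d j ≤ a d j')
    (ha_mem : ∀ d j, j < d → a d j ∈ Set.Icc (0:ℝ) (1/2))
    (Fs : ℝ → ℝ)
    (hFs_mono : MonotoneOn Fs (Set.Icc 0 1))
    (hFs_half : Fs (1/2) = 1)
    (hG : ∀ t ∈ Set.Ioo (0:ℝ) (1/2), Tendsto (fun d : ℕ =>
      (1/(d:ℝ)) * ∑ j ∈ range d, (if a d j ≤ t then (1:ℝ) else 0)) atTop (𝓝 (Fs t)))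
    (Q : ℝ → ℝ) (hQ : ∀ q, Q q = sInf {t | t ∈ Set.Icc (0:ℝ) 1 ∧ q ≤ Fs t})
    (q : ℝ) (hq : q ∈ Set.Ioo (0:ℝ) 1) (hcont : ContinuousAt Q q) :
    Tendsto (fun d : ℕ => a d ⌊q * d⌋₊) atTop (𝓝 (Q q)) := by
  obtain ⟨hq1, hq2⟩ := hq
  set S : ℝ → Set ℝ := fun r => {t | t ∈ Set.Icc (0:ℝ) 1 ∧ r ≤ Fs t} with hS_def
  have hhalf : ∀ r : ℝ, r ≤ 1 → (1/2 : ℝ) ∈ S r := by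
    intro r hr
    exact ⟨⟨by norm_num, by norm_num⟩, by rw [hFs_half]; exact hr⟩
  have hbdd : ∀ r : ℝ, BddBelow (S r) := fun r => ⟨0, fun t ht => ht.1.1⟩
  obtain ⟨x, hx_def⟩ : ∃ y : ℝ, y = Q q := ⟨_, rfl⟩
  rw [← hx_def]
  have hx_eq : x = sInf (S q) := by rw [hx_def]; exact hQ q
  have hx_le : x ≤ 1/2 := by rw [hx_eq]; exact csInf_le (hbdd q) (hhalf q hq2.le)
  have hx_0 : 0 ≤ x := by
    rw [hx_eq]
    exact le_csInf ⟨1/2, hhalf q hq2.le⟩ (fun t ht => ht.1.1)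
  have hlt : ∀ t ∈ Set.Icc (0:ℝ) 1, t < x → Fs t < q := by
    intro t ht htx
    by_contra hcon
    push_neg at hcon
    have : x ≤ t := by rw [hx_eq]; exact csInf_le (hbdd q) ⟨ht, hcon⟩
    linarith
  have hgt : ∀ t : ℝ, x < t → t ≤ 1/2 → q < Fs t := by
    intro t hxt ht2
    have hIio : Set.Iio t ∈ 𝓝 x := Iio_mem_nhds hxt
    have hpre : Q ⁻¹' Set.Iio t ∈ 𝓝 q := hcont (by rw [← hx_def]; exact hIio)
    rw [Metric.mem_nhds_iff] at hpre
    obtain ⟨ε, hε, hball⟩ := hpre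
    obtain ⟨q', hq'_def⟩ : ∃ y : ℝ, y = q + min (ε/2) ((1-q)/2) := ⟨_, rfl⟩
    have hmin_pos : 0 < min (ε/2) ((1-q)/2) := lt_min (by linarith) (by linarith)
    have hmin1 : min (ε/2) ((1-q)/2) ≤ ε/2 := min_le_left _ _
    have hmin2 : min (ε/2) ((1-q)/2) ≤ (1-q)/2 := min_le_right _ _
    have hq'1 : q < q' := by rw [hq'_def]; linarith
    have hq'2 : q' < 1 := by rw [hq'_def]; linarith
    have hq'ball : q' ∈ Metric.ball q ε := by
      rw [Metric.mem_ball, Real.dist_eq, hq'_def,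
        show q + min (ε/2) ((1-q)/2) - q = min (ε/2) ((1-q)/2) by ring,
        abs_of_nonneg hmin_pos.le]
      linarith
    have hQq' : Q q' < t := hball hq'ball
    have hne : (S q').Nonempty := ⟨1/2, hhalf q' hq'2.le⟩
    have hsInf : sInf (S q') < t := by rw [← hQ q']; exact hQq'
    obtain ⟨s, hsS, hst⟩ := exists_lt_of_csInf_lt hne hsInf
    have hFst : Fs s ≤ Fs t :=
      hFs_mono hsS.1 ⟨le_trans hsS.1.1 hst.le, by linarith⟩ hst.le
    exact lt_of_lt_of_le (lt_of_lt_of_le hq'1 hsS.2) hFst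
  have hE1 : ∀ᶠ d : ℕ in atTop, 1 ≤ d := eventually_ge_atTop 1
  have hE2 : ∀ᶠ d : ℕ in atTop, ⌊q * d⌋₊ < d := by
    filter_upwards [eventually_ge_atTop 1] with d hd
    have hd0 : (0:ℝ) < d := by exact_mod_cast hd
    have h1 : (⌊q * d⌋₊ : ℝ) ≤ q * d := Nat.floor_le (by positivity)
    have h2 : q * d < d := by nlinarith
    exact_mod_cast lt_of_le_of_lt h1 h2
  rw [Metric.tendsto_atTop]
  intro ε hε
  have hub : ∀ᶠ d : ℕ in atTop, a d ⌊q * d⌋₊ < x + ε := by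
    rcases lt_or_ge (x + ε/2) (1/2) with hcase | hcase
    · set t := x + ε/2 with ht_def
      have hFst : q < Fs t := hgt t (by rw [ht_def]; linarith) (by linarith)
      have hGt := hG t ⟨by rw [ht_def]; linarith, by rw [ht_def]; linarith⟩
      obtain ⟨c, hc_def⟩ : ∃ y : ℝ, y = (q + Fs t)/2 := ⟨_, rfl⟩
      have hc1 : q < c := by rw [hc_def]; linarith
      have hc2 : c < Fs t := by rw [hc_def]; linarith
      have hGev : ∀ᶠ d : ℕ in atTop,
          c < (1/(d:ℝ)) * ∑ j ∈ range d, (if a d j ≤ t then (1:ℝ) else 0) :=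
        hGt.eventually (eventually_gt_nhds hc2)
      have hRev : ∀ᶠ d : ℕ in atTop, ((⌊q * d⌋₊ : ℝ) + 1) / d < c :=
        (hlp_floor_tendsto hq1.le).eventually (eventually_lt_nhds hc1)
      filter_upwards [hGev, hRev, hE1, hE2] with d hGd hRd hd1 hd2
      have hd0 : (0:ℝ) < d := by exact_mod_cast hd1
      have hkey : ((⌊q * d⌋₊ : ℝ) + 1)
          ≤ ∑ j ∈ range d, (if a d j ≤ t then (1:ℝ) else 0) := by
        have h6 : ((⌊q * d⌋₊ : ℝ) + 1)/d * d = (⌊q * d⌋₊ : ℝ) + 1 :=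
          div_mul_cancel₀ _ (ne_of_gt hd0)
        have h7 : (1/(d:ℝ)) * (∑ j ∈ range d, (if a d j ≤ t then (1:ℝ) else 0)) * d
            = ∑ j ∈ range d, (if a d j ≤ t then (1:ℝ) else 0) := by
          field_simp
        nlinarith [mul_lt_mul_of_pos_right (lt_trans hRd hGd) hd0]
      have := (hlp_orderstat (ha_mono d) hd2 t).mpr hkey
      rw [ht_def] at this
      linarith
    · filter_upwards [hE2] with d hd2
      have := (ha_mem d _ hd2).2
      linarith
  have hlb : ∀ᶠ d : ℕ in atTop, x - ε < a d ⌊q * d⌋₊ := by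
    rcases le_or_gt x (ε/2) with hcase | hcase
    · filter_upwards [hE2] with d hd2
      have := (ha_mem d _ hd2).1
      linarith
    · set t := x - ε/2 with ht_def
      have hFst : Fs t < q := hlt t ⟨by rw [ht_def]; linarith, by rw [ht_def]; linarith⟩
        (by rw [ht_def]; linarith)
      have hGt := hG t ⟨by rw [ht_def]; linarith, by rw [ht_def]; linarith⟩
      have hGev : ∀ᶠ d : ℕ in atTop,
          (1/(d:ℝ)) * ∑ j ∈ range d, (if a d j ≤ t then (1:ℝ) else 0) < q :=
        hGt.eventually (eventually_lt_nhds hFst)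
      filter_upwards [hGev, hE1, hE2] with d hGd hd1 hd2
      have hd0 : (0:ℝ) < d := by exact_mod_cast hd1
      have hfl : q * d < (⌊q * d⌋₊ : ℝ) + 1 := Nat.lt_floor_add_one _
      have hkey : ¬ (((⌊q * d⌋₊ : ℝ) + 1)
          ≤ ∑ j ∈ range d, (if a d j ≤ t then (1:ℝ) else 0)) := by
        intro hcon
        have h7 : (1/(d:ℝ)) * (∑ j ∈ range d, (if a d j ≤ t then (1:ℝ) else 0)) * d
            = ∑ j ∈ range d, (if a d j ≤ t then (1:ℝ) else 0) := by
          field_simp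
        nlinarith [mul_lt_mul_of_pos_right hGd hd0]
      have hna : ¬ a d ⌊q * d⌋₊ ≤ t := fun hle =>
        hkey ((hlp_orderstat (ha_mono d) hd2 t).mp hle)
      push_neg at hna
      rw [ht_def] at hna
      linarith
  have hfin : ∀ᶠ d : ℕ in atTop, dist (a d ⌊q * d⌋₊) x < ε := by
    filter_upwards [hub, hlb] with d h1 h2
    rw [Real.dist_eq, abs_lt]
    constructor <;> linarith
  exact eventually_atTop.mp hfin


lemma hlp_final (β : ℝ) (hβ1 : 0 < β) (hβ2 : β < 1)
    (a : ℕ → ℕ → ℝ) (ha_mem : ∀ d j, j < d → a d j ∈ Set.Icc (0:ℝ) (1/2))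
    (Q : ℝ → ℝ)
    (hQmono : MonotoneOn Q (Set.Ioc 0 1))
    (hQlim : ∀ q ∈ Set.Ioo β 1, ContinuousAt Q q →
      Tendsto (fun d : ℕ => a d ⌊q * d⌋₊) atTop (𝓝 (Q q))) :
    Tendsto (fun d : ℕ => (1/(d:ℝ)) * ∑ j ∈ Finset.Ico (⌊β * (d:ℝ)⌋₊) d,
      a d j * (1 - a d j)) atTop (𝓝 (∫ q in β..(1:ℝ), Q q * (1 - Q q))) := by
  -- the step functions
  set ψ : ℕ → ℝ → ℝ := fun d q => ∑ j ∈ Finset.Ico (⌊β * (d:ℝ)⌋₊) d,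
    Set.indicator (Set.Ico ((j:ℝ)/d) (((j:ℝ)+1)/d)) (fun _ => a d j * (1 - a d j)) q
    with hψ_def
  -- characterization of interval membership
  have hchar : ∀ d : ℕ, 1 ≤ d → ∀ (j : ℕ) (q : ℝ),
      q ∈ Set.Ico ((j:ℝ)/d) (((j:ℝ)+1)/d) ↔ (0 ≤ q ∧ ⌊q * d⌋₊ = j) := by
    intro d hd j q
    have hd0 : (0:ℝ) < d := by exact_mod_cast hd
    constructor
    · rintro ⟨h1, h2⟩
      have hq0 : 0 ≤ q := le_trans (by positivity) h1
      refine ⟨hq0, ?_⟩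
      rw [Nat.floor_eq_iff (by positivity)]
      exact ⟨by rwa [div_le_iff₀ hd0] at h1, by rwa [lt_div_iff₀ hd0] at h2⟩
    · rintro ⟨hq0, rfl⟩
      constructor
      · rw [div_le_iff₀ hd0]
        exact Nat.floor_le (by positivity)
      · rw [lt_div_iff₀ hd0]
        exact Nat.lt_floor_add_one _
  -- evaluation of ψ
  have heval1 : ∀ d : ℕ, 1 ≤ d → ∀ q : ℝ, 0 ≤ q → ⌊β * (d:ℝ)⌋₊ ≤ ⌊q * d⌋₊ → ⌊q * d⌋₊ < d →
      ψ d q = a d ⌊q * d⌋₊ * (1 - a d ⌊q * d⌋₊) := by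
    intro d hd q hq0 hm hlt
    simp only [hψ_def]
    rw [Finset.sum_eq_single_of_mem ⌊q * d⌋₊ (Finset.mem_Ico.mpr ⟨hm, hlt⟩)]
    · exact Set.indicator_of_mem ((hchar d hd _ q).mpr ⟨hq0, rfl⟩) _
    · intro b _ hb
      refine Set.indicator_of_notMem (fun hmem => hb ?_) _
      exact (((hchar d hd b q).mp hmem).2).symm
  have heval0 : ∀ (d : ℕ) (q : ℝ),
      ¬(0 ≤ q ∧ ⌊β * (d:ℝ)⌋₊ ≤ ⌊q * d⌋₊ ∧ ⌊q * d⌋₊ < d) → ψ d q = 0 := by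
    intro d q hcond
    rcases Nat.eq_zero_or_pos d with hd0 | hd1
    · subst hd0; simp [hψ_def]
    · simp only [hψ_def]
      refine Finset.sum_eq_zero fun j hj => ?_
      refine Set.indicator_of_notMem (fun hmem => ?_) _
      obtain ⟨hq0, hfl⟩ := (hchar d hd1 j q).mp hmem
      obtain ⟨hj1, hj2⟩ := Finset.mem_Ico.mp hj
      exact hcond ⟨hq0, by rw [hfl]; exact hj1, by rw [hfl]; exact hj2⟩
  -- integral of ψ
  have hψint : ∀ d : ℕ, ∫ q, ψ d q
      = (1/(d:ℝ)) * ∑ j ∈ Finset.Ico (⌊β * (d:ℝ)⌋₊) d, a d j * (1 - a d j) := by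
    intro d
    rcases Nat.eq_zero_or_pos d with hd0 | hd1
    · subst hd0; simp [hψ_def]
    · have hd0 : (0:ℝ) < d := by exact_mod_cast hd1
      have hint : ∀ j ∈ Finset.Ico (⌊β * (d:ℝ)⌋₊) d,
          Integrable (fun q => Set.indicator (Set.Ico ((j:ℝ)/d) (((j:ℝ)+1)/d))
            (fun _ => a d j * (1 - a d j)) q) := by
        intro j _
        rw [integrable_indicator_iff measurableSet_Ico]
        refine (integrableOn_const_iff enorm_ne_top).mpr (Or.inr ?_)
        rw [Real.volume_Ico]
        exact ENNReal.ofReal_lt_top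
      simp only [hψ_def]
      rw [integral_finset_sum _ hint]
      rw [Finset.mul_sum]
      refine Finset.sum_congr rfl fun j _ => ?_
      rw [integral_indicator_const _ measurableSet_Ico, measureReal_def, Real.volume_Ico,
        show ((j:ℝ)+1)/d - (j:ℝ)/d = 1/d by field_simp; ring,
        ENNReal.toReal_ofReal (by positivity), smul_eq_mul]
  -- measurability
  have hψmeas : ∀ d : ℕ, AEStronglyMeasurable (ψ d) volume := by
    intro d
    refine Measurable.aestronglyMeasurable ?_
    simp only [hψ_def]
    exact Finset.measurable_sum _ fun j _ =>
      (measurable_const.indicator measurableSet_Ico)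
  -- bound
  set bound : ℝ → ℝ := Set.indicator (Set.Icc (0:ℝ) 1) (fun _ => (1/4:ℝ)) with hbound_def
  have hbound_nonneg : ∀ q, 0 ≤ bound q := fun q =>
    Set.indicator_nonneg (fun _ _ => by norm_num) q
  have h_bound : ∀ d : ℕ, ∀ᵐ q : ℝ, ‖ψ d q‖ ≤ bound q := by
    intro d
    refine Filter.Eventually.of_forall fun q => ?_
    by_cases hcond : 0 ≤ q ∧ ⌊β * (d:ℝ)⌋₊ ≤ ⌊q * d⌋₊ ∧ ⌊q * d⌋₊ < d
    · rcases Nat.eq_zero_or_pos d with hd0 | hd1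
      · exact absurd (hd0 ▸ hcond.2.2) (Nat.not_lt_zero _)
      · obtain ⟨hq0, hm, hlt⟩ := hcond
        rw [heval1 d hd1 q hq0 hm hlt]
        have hd0 : (0:ℝ) < d := by exact_mod_cast hd1
        have hq1 : q ≤ 1 := by
          have h1 : q * d < (⌊q * d⌋₊ : ℝ) + 1 := Nat.lt_floor_add_one _
          have h2 : ((⌊q * d⌋₊ : ℝ) + 1) ≤ d := by exact_mod_cast hlt
          nlinarith
        have hb : bound q = 1/4 := by
          rw [hbound_def]
          exact Set.indicator_of_mem (Set.mem_Icc.mpr ⟨hq0, hq1⟩) _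
        rw [hb]
        obtain ⟨ha1, ha2⟩ := ha_mem d _ hlt
        rw [Real.norm_eq_abs, abs_of_nonneg (by nlinarith)]
        nlinarith
    · rw [heval0 d q hcond, norm_zero]
      exact hbound_nonneg q
  have hbound_int : Integrable bound := by
    rw [hbound_def, integrable_indicator_iff measurableSet_Icc]
    refine (integrableOn_const_iff enorm_ne_top).mpr (Or.inr ?_)
    rw [Real.volume_Icc]
    exact ENNReal.ofReal_lt_top
  -- the clamped quantile function
  set Q' : ℝ → ℝ := fun r => Q (max β (min r 1)) with hQ'_def
  have hclamp_mem : ∀ r : ℝ, max β (min r 1) ∈ Set.Ioc (0:ℝ) 1 :=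
    fun r => ⟨lt_of_lt_of_le hβ1 (le_max_left _ _),
      max_le hβ2.le (min_le_right _ _)⟩
  have hQ'mono : Monotone Q' := by
    intro r r' hrr
    exact hQmono (hclamp_mem r) (hclamp_mem r')
      (max_le_max le_rfl (min_le_min hrr le_rfl))
  have hQ'eq : ∀ r ∈ Set.Ioo β 1, Q' r = Q r := by
    intro r hr
    simp only [hQ'_def]
    rw [min_eq_left hr.2.le, max_eq_right hr.1.le]
  -- limit function
  set Φ : ℝ → ℝ := Set.indicator (Set.Ioc β 1) (fun q => Q q * (1 - Q q)) with hΦ_def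
  have hD := hQ'mono.countable_not_continuousAt
  have hne : ∀ c : ℝ, ∀ᵐ q : ℝ, q ≠ c := by
    intro c
    rw [MeasureTheory.ae_iff]
    have hset : {a : ℝ | ¬ a ≠ c} = {c} := by ext r; simp [not_not]
    rw [hset, Real.volume_singleton]
  have h_lim : ∀ᵐ q : ℝ, Tendsto (fun d : ℕ => ψ d q) atTop (𝓝 (Φ q)) := by
    filter_upwards [hD.ae_notMem volume, hne β, hne 1] with q hqD hqβ hq1
    have hcast : Tendsto (fun d : ℕ => (d:ℝ)) atTop atTop := tendsto_natCast_atTop_atTop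
    rcases lt_trichotomy q β with hqβ' | h | hqβ'
    · -- q < β : limit 0
      have hΦ0 : Φ q = 0 := by
        rw [hΦ_def]
        exact Set.indicator_of_notMem (fun hmem => absurd hmem.1 (not_lt.mpr hqβ'.le)) _
      rw [hΦ0]
      rcases lt_or_ge q 0 with hq0 | hq0
      · refine Tendsto.congr' ?_ tendsto_const_nhds
        refine Filter.Eventually.of_forall fun d => ?_
        exact (heval0 d q (fun h => absurd h.1 (not_le.mpr hq0))).symm
      · refine Tendsto.congr' ?_ tendsto_const_nhds
        filter_upwards [hcast.eventually_ge_atTop (2/(β - q))] with d hd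
        refine (heval0 d q (fun h => ?_)).symm
        obtain ⟨_, hm, _⟩ := h
        have hd2 : 2 ≤ (d:ℝ) * (β - q) := (div_le_iff₀ (by linarith)).mp hd
        have hexp : (d:ℝ) * (β - q) = β * d - q * d := by ring
        have h1 : (⌊q * d⌋₊ : ℝ) ≤ q * d := Nat.floor_le (by positivity)
        have h2 : β * d - 1 < (⌊β * (d:ℝ)⌋₊ : ℝ) := by
          have := Nat.lt_floor_add_one (β * (d:ℝ))
          linarith
        have : (⌊q * d⌋₊ : ℝ) < (⌊β * (d:ℝ)⌋₊ : ℝ) := by linarith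
        have hlt : ⌊q * d⌋₊ < ⌊β * (d:ℝ)⌋₊ := by exact_mod_cast this
        omega
    · exact absurd h hqβ
    · rcases lt_trichotomy q 1 with hq1' | h1 | hq1'
      · -- β < q < 1 : limit Q q (1 - Q q)
        have hqIoo : q ∈ Set.Ioo β 1 := ⟨hqβ', hq1'⟩
        have hΦv : Φ q = Q q * (1 - Q q) := by
          rw [hΦ_def]
          exact Set.indicator_of_mem (Set.mem_Ioc.mpr ⟨hqβ', hq1'.le⟩) _
        rw [hΦv]
        have hcQ : ContinuousAt Q q := by
          have hcQ' : ContinuousAt Q' q := not_not.mp hqD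
          exact hcQ'.congr (Filter.eventuallyEq_of_mem (Ioo_mem_nhds hqIoo.1 hqIoo.2) hQ'eq)
        have hlim' := hQlim q hqIoo hcQ
        have hmul : Tendsto (fun d : ℕ => a d ⌊q * d⌋₊ * (1 - a d ⌊q * d⌋₊)) atTop
            (𝓝 (Q q * (1 - Q q))) := hlim'.mul (tendsto_const_nhds.sub hlim')
        refine Tendsto.congr' ?_ hmul
        filter_upwards [hcast.eventually_ge_atTop (2/(q - β)),
          hcast.eventually_ge_atTop 1] with d hd hd1
        have hd0 : (0:ℝ) < d := lt_of_lt_of_le one_pos hd1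
        have hq0 : (0:ℝ) ≤ q := le_of_lt (lt_trans hβ1 hqβ')
        have hd2 : 2 ≤ (d:ℝ) * (q - β) := (div_le_iff₀ (by linarith)).mp hd
        have hexp : (d:ℝ) * (q - β) = q * d - β * d := by ring
        have h1 : (⌊β * (d:ℝ)⌋₊ : ℝ) ≤ β * d := Nat.floor_le (by positivity)
        have h2 : q * d - 1 < (⌊q * (d:ℝ)⌋₊ : ℝ) := by
          have := Nat.lt_floor_add_one (q * (d:ℝ))
          linarith
        have hm : ⌊β * (d:ℝ)⌋₊ ≤ ⌊q * (d:ℝ)⌋₊ := by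
          have : (⌊β * (d:ℝ)⌋₊ : ℝ) < (⌊q * (d:ℝ)⌋₊ : ℝ) := by linarith
          exact_mod_cast le_of_lt this
        have hlt : ⌊q * (d:ℝ)⌋₊ < d := by
          have h3 : (⌊q * (d:ℝ)⌋₊ : ℝ) ≤ q * d := Nat.floor_le (mul_nonneg hq0 hd0.le)
          have h4 : q * d < d := by nlinarith
          exact_mod_cast lt_of_le_of_lt h3 h4
        have hd1' : 1 ≤ d := by exact_mod_cast hd1
        exact (heval1 d hd1' q (by linarith) hm hlt).symm
      · exact absurd h1 hq1
      · -- q > 1 : limit 0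
        have hΦ0 : Φ q = 0 := by
          rw [hΦ_def]
          exact Set.indicator_of_notMem (fun hmem => absurd hmem.2 (not_le.mpr hq1')) _
        rw [hΦ0]
        refine Tendsto.congr' ?_ tendsto_const_nhds
        refine Filter.Eventually.of_forall fun d => ?_
        refine (heval0 d q fun h => ?_).symm
        obtain ⟨hq0, _, hlt⟩ := h
        have hcd : (0:ℝ) ≤ (d:ℝ) := Nat.cast_nonneg d
        have : (d:ℕ) ≤ ⌊q * (d:ℝ)⌋₊ := Nat.le_floor (by nlinarith)
        omega
  -- conclude by dominated convergence
  have hDCT := MeasureTheory.tendsto_integral_of_dominated_convergence bound hψmeas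
    hbound_int h_bound h_lim
  have hΦint : ∫ q, Φ q = ∫ q in β..(1:ℝ), Q q * (1 - Q q) := by
    rw [hΦ_def, integral_indicator measurableSet_Ioc,
      intervalIntegral.integral_of_le (le_of_lt hβ2)]
  rw [← hΦint]
  exact hDCT.congr fun d => hψint d

theorem stmt_4
    -- the triangular array of independent Bernoulli random variables
    {Ω : ℕ → Type*} [∀ d, MeasurableSpace (Ω d)]
    (μ : ∀ d, Measure (Ω d)) [∀ d, IsProbabilityMeasure (μ d)]
    (p : ℕ → ℕ → ℝ) (hp : ∀ d i, i < d → p d i ∈ Set.Icc (0 : ℝ) 1)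
    (X : ∀ d, ℕ → Ω d → ℝ)
    (hmeas : ∀ d i, Measurable (X d i))
    (hval : ∀ d i ω, X d i ω = 0 ∨ X d i ω = 1)
    (hbern : ∀ d i, i < d → μ d {ω | X d i ω = 1} = ENNReal.ofReal (p d i))
    (hindep : ∀ d, iIndepFun
      (fun i : Fin d => X d (i : ℕ)) (μ d))
    -- transformed quantities
    (pstar : ℕ → ℕ → ℝ)
    (hpstar : ∀ d i, pstar d i = min (p d i) (1 - p d i))
    (Xstar : ∀ d, ℕ → Ω d → ℝ)
    (hXstar : ∀ d i ω,
      Xstar d i ω = if p d i ≤ 1 / 2 then X d i ω else 1 - X d i ω)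
    -- an ordering of {0,…,d−1} making `pstar` nondecreasing
    (ord : ℕ → ℕ → ℕ)
    (hord_bij : ∀ d, Set.BijOn (ord d) (Set.Iio d) (Set.Iio d))
    (hord_mono : ∀ d j j', j ≤ j' → j' < d →
      pstar d (ord d j) ≤ pstar d (ord d j'))
    -- the stability assumption
    (F : ℝ → ℝ)
    (hF_mono : MonotoneOn F (Set.Icc 0 1))
    (hF_rc : ∀ t ∈ Set.Ico (0 : ℝ) 1,
      Tendsto F (nhdsWithin t (Set.Ioi t)) (nhds (F t)))
    (hF0 : Tendsto F (nhdsWithin 0 (Set.Ioi 0)) (nhds 0))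
    (hF1 : Tendsto F (nhdsWithin 1 (Set.Iio 1)) (nhds 1))
    (hstab : ∀ t ∈ Set.Icc (0 : ℝ) 1, ContinuousWithinAt F (Set.Icc 0 1) t →
      Tendsto (fun d : ℕ => (1 / (d : ℝ)) *
          ∑ i ∈ Finset.range d, (if p d i ≤ t then (1 : ℝ) else 0))
        atTop (nhds (F t)))
    -- the transformed cdf and its quantile function
    (Fstar : ℝ → ℝ)
    (hFstar : ∀ t, Fstar t = if t ≤ 1 / 2 then F t + 1 - F (1 - t) else 1)
    (hFstar_cont : ContinuousOn Fstar (Set.Icc 0 1))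
    (hFstar_mono : MonotoneOn Fstar (Set.Icc 0 1))
    (Qstar : ℝ → ℝ)
    (hQ : ∀ q, Qstar q = sInf {t | t ∈ Set.Icc (0 : ℝ) 1 ∧ q ≤ Fstar t})
    (β : ℝ) (hβ : β ∈ Set.Ioo (0 : ℝ) 1) :
    -- the normalized sophisticated risk equals the deterministic sum …
    (∀ d : ℕ,
      (∫ ω, (1 / (d : ℝ)) * ∑ j ∈ Finset.Ico (Nat.floor (β * d)) d,
          (Xstar d (ord d j) ω - pstar d (ord d j)) ^ 2 ∂(μ d))
        = (1 / (d : ℝ)) * ∑ j ∈ Finset.Ico (Nat.floor (β * d)) d,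
            pstar d (ord d j) * (1 - pstar d (ord d j))) ∧
    -- … and converges to the limiting integral
    Tendsto (fun d : ℕ => (1 / (d : ℝ)) * ∑ j ∈ Finset.Ico (Nat.floor (β * d)) d,
        pstar d (ord d j) * (1 - pstar d (ord d j)))
      atTop (nhds (∫ q in β..(1 : ℝ), Qstar q * (1 - Qstar q))) := by
  -- pointwise continuity of F on (0,1) \ {1/2}
  have hFs' : ∀ s : ℝ, s ≤ 1/2 → Fstar s = F s + 1 - F (1-s) := fun s hs => by
    rw [hFstar s, if_pos hs]
  have hFc : ∀ t ∈ Set.Ioo (0:ℝ) 1, t ≠ 1/2 → ContinuousAt F t :=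
    hlp_cont hF_mono hFs' hFstar_cont
  have hstab' : ∀ t ∈ Set.Ioo (0:ℝ) 1, t ≠ 1/2 → Tendsto (fun d : ℕ =>
      (1/(d:ℝ)) * ∑ i ∈ Finset.range d, (if p d i ≤ t then (1:ℝ) else 0)) atTop (𝓝 (F t)) :=
    fun t ht hne => hstab t ⟨ht.1.le, ht.2.le⟩ (hFc t ht hne).continuousWithinAt
  have hFs_half : Fstar (1/2 : ℝ) = 1 := by
    rw [hFstar, if_pos le_rfl]; ring
  have ha_mono : ∀ d j j', j ≤ j' → j' < d →
      pstar d (ord d j) ≤ pstar d (ord d j') := hord_mono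
  have ha_mem : ∀ d j, j < d → pstar d (ord d j) ∈ Set.Icc (0:ℝ) (1/2) := by
    intro d j hj
    have hi : ord d j < d := (hord_bij d).mapsTo (Set.mem_Iio.mpr hj)
    obtain ⟨hp0, hp1⟩ := hp d (ord d j) hi
    rw [hpstar]
    constructor
    · exact le_min hp0 (by linarith)
    · rcases le_total (p d (ord d j)) (1 - p d (ord d j)) with hc | hc
      · rw [min_eq_left hc]; linarith
      · rw [min_eq_right hc]; linarith
  have hG : ∀ t ∈ Set.Ioo (0:ℝ) (1/2), Tendsto (fun d : ℕ =>
      (1/(d:ℝ)) * ∑ j ∈ Finset.range d,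
        (if pstar d (ord d j) ≤ t then (1:ℝ) else 0)) atTop (𝓝 (Fstar t)) := by
    intro t ht
    have h1 := hlp_ecdf p F hstab' hFc t ht
    have hFst : Fstar t = F t + (1 - F (1-t)) := by
      rw [hFs' t ht.2.le]; ring
    rw [hFst]
    refine h1.congr fun d => ?_
    congr 1
    have hb := hlp_bij_sum (hord_bij d)
      (fun i => if min (p d i) (1 - p d i) ≤ t then (1:ℝ) else 0)
    simp only [hpstar]
    exact hb.symm
  have hQlim : ∀ q ∈ Set.Ioo β 1, ContinuousAt Qstar q →
      Tendsto (fun d : ℕ => pstar d (ord d ⌊q * (d:ℝ)⌋₊)) atTop (𝓝 (Qstar q)) := by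
    intro q hq hc
    exact hlp_quant (fun d j => pstar d (ord d j)) ha_mono ha_mem Fstar hFstar_mono
      hFs_half hG Qstar hQ q ⟨lt_trans hβ.1 hq.1, hq.2⟩ hc
  have hQmono : MonotoneOn Qstar (Set.Ioc 0 1) := by
    intro q hq q' hq' hle
    rw [hQ, hQ]
    refine csInf_le_csInf ⟨0, fun t ht => ht.1.1⟩
      ⟨1/2, ⟨by norm_num, by norm_num⟩, by rw [hFs_half]; exact hq'.2⟩
      (fun t ht => ⟨ht.1, le_trans hle ht.2⟩)
  constructor
  · -- the integral identity
    intro d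
    have key : ∀ j ∈ Finset.Ico (Nat.floor (β * d)) d,
        Integrable (fun ω => ((if p d (ord d j) ≤ 1/2 then X d (ord d j) ω
            else 1 - X d (ord d j) ω) - min (p d (ord d j)) (1 - p d (ord d j)))^2) (μ d) ∧
        ∫ ω, ((if p d (ord d j) ≤ 1/2 then X d (ord d j) ω
            else 1 - X d (ord d j) ω) - min (p d (ord d j)) (1 - p d (ord d j)))^2 ∂(μ d)
          = min (p d (ord d j)) (1 - p d (ord d j))
            * (1 - min (p d (ord d j)) (1 - p d (ord d j))) := by
      intro j hj
      have hjd : j < d := (Finset.mem_Ico.mp hj).2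
      have hi : ord d j < d := (hord_bij d).mapsTo (Set.mem_Iio.mpr hjd)
      exact hlp_bern_sq (μ d) _ (hmeas d _) (hval d _) _ (hp d _ hi).1 (hbern d _ hi)
    simp only [hXstar, hpstar]
    rw [integral_const_mul, integral_finset_sum _ (fun j hj => (key j hj).1)]
    congr 1
    exact Finset.sum_congr rfl fun j hj => (key j hj).2
  · -- the convergence
    have hfin := hlp_final β hβ.1 hβ.2 (fun d j => pstar d (ord d j)) ha_mem Qstar
      hQmono hQlim
    simp only [hpstar] at hfin ⊢
    exact hfin
end

section
/- Under the stability assumption, for any fixed β ∈ (0,1), the asymptotic normalized risk of fixed surprise highlighting for a naive agent, namely E[(1/d) Σ_{j=1}^{⌊βd⌋} 1(X*_{d,(j)}=0)(X*_{d,(j)} − p*_{d,(j)})² + (1/d) Σ_{j=⌊βd⌋+1}^{d} (X*_{d,(j)} − p*_{d,(j)})²] = (1/d) Σ_{j=1}^{⌊βd⌋} (p*_{d,(j)})²(1 − p*_{d,(j)}) + (1/d) Σ_{j=⌊βd⌋+1}^{d} p*_{d,(j)}(1 − p*_{d,(j)}), converges as d → ∞ to ∫_0^β (Q*(q))²(1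 − Q*(q)) dq + ∫_β^1 Q*(q)(1 − Q*(q)) dq. -/
/-!
Statement 5: Under the stability assumption, for any fixed `β ∈ (0,1)`, the
asymptotic normalized risk of fixed surprise highlighting for a naive agent,
namely
`E[(1/d) Σ_{j=1}^{⌊βd⌋} 1(X*_{d,(j)}=0)(X*_{d,(j)} − p*_{d,(j)})²
   + (1/d) Σ_{j=⌊βd⌋+1}^{d} (X*_{d,(j)} − p*_{d,(j)})²]
 = (1/d) Σ_{j=1}^{⌊βd⌋} (p*_{d,(j)})²(1 − p*_{d,(j)})
   + (1/d) Σ_{j=⌊βd⌋+1}^{d} p*_{d,(j)}(1 − p*_{d,(j)})`,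
converges as `d → ∞` to
`∫_0^β (Q*(q))²(1 − Q*(q)) dq + ∫_β^1 Q*(q)(1 − Q*(q)) dq`.
-/

open Finset MeasureTheory ProbabilityTheory Filter

lemma downclosed_eq_range (S : Finset ℕ) (hdc : ∀ j ∈ S, ∀ i, i ≤ j → i ∈ S) :
    S = Finset.range S.card := by
  rcases S.eq_empty_or_nonempty with h | h
  · simp [h]
  · have hmax := S.max'_mem h
    have h1 : S = Finset.range (S.max' h + 1) := by
      ext i
      simp only [Finset.mem_range, Nat.lt_succ_iff]
      exact ⟨fun hi => S.le_max' i hi, fun hi => hdc _ hmax i hi⟩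
    have h2 : S.card = S.max' h + 1 := by
      conv_lhs => rw [h1]
      rw [Finset.card_range]
    rw [h2, ← h1]

lemma integral_two_valued {Ω : Type*} [MeasurableSpace Ω] (μ : Measure Ω) [IsProbabilityMeasure μ]
    (Y : Ω → ℝ) (hY : Measurable Y) (hval : ∀ ω, Y ω = 0 ∨ Y ω = 1)
    (r : ℝ) (hr0 : 0 ≤ r) (hr1 : r ≤ 1) (hdist : μ {ω | Y ω = 1} = ENNReal.ofReal r)
    (v0 v1 : ℝ) :
    Integrable (fun ω => if Y ω = 0 then v0 else v1) μ ∧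
      ∫ ω, (if Y ω = 0 then v0 else v1) ∂μ = v0 * (1 - r) + v1 * r := by
  have ms : MeasurableSet {ω | Y ω = 1} := hY (measurableSet_singleton 1)
  have hfun : (fun ω => if Y ω = 0 then v0 else v1) =
      (fun ω => Set.indicator {ω | Y ω = 1} (fun _ => v1) ω
        + Set.indicator ({ω | Y ω = 1}ᶜ) (fun _ => v0) ω) := by
    funext ω
    rcases hval ω with h | h <;> simp [Set.indicator, Set.mem_setOf_eq, h]
  have hint1 : Integrable (Set.indicator {ω | Y ω = 1} (fun _ => v1)) μ :=
    (integrable_const v1).indicator ms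
  have hint0 : Integrable (Set.indicator ({ω | Y ω = 1}ᶜ) (fun _ => v0)) μ :=
    (integrable_const v0).indicator ms.compl
  constructor
  · rw [hfun]; exact hint1.add hint0
  · rw [hfun, integral_add hint1 hint0, integral_indicator_const _ ms,
      integral_indicator_const _ ms.compl, measureReal_def, measureReal_def,
      prob_compl_eq_one_sub ms, hdist]
    have h1 : (ENNReal.ofReal r).toReal = r := ENNReal.toReal_ofReal hr0
    have h2 : ((1 : ENNReal) - ENNReal.ofReal r).toReal = 1 - r := by
      rw [← ENNReal.ofReal_one, ← ENNReal.ofReal_sub _ hr0,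
        ENNReal.toReal_ofReal (by linarith)]
    rw [h1, h2, smul_eq_mul, smul_eq_mul]
    ring


lemma F_contWithin (F Fstar : ℝ → ℝ)
    (hF_mono : MonotoneOn F (Set.Icc 0 1))
    (hFstar : ∀ t, Fstar t = if t ≤ 1 / 2 then F t + 1 - F (1 - t) else 1)
    (hFstar_cont : ContinuousOn Fstar (Set.Icc 0 1)) :
    ∀ s ∈ Set.Icc (0:ℝ) 1, ContinuousWithinAt F (Set.Icc 0 1) s := by
  have hFlow : ∀ t : ℝ, t ≤ 1/2 → Fstar t = F t + 1 - F (1 - t) := by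
    intro t ht; rw [hFstar, if_pos ht]
  have hFhigh : ∀ t : ℝ, 1/2 ≤ t → Fstar t = 1 := by
    intro t ht; rw [hFstar]
    split_ifs with h
    · have : t = 1/2 := le_antisymm h ht
      subst this
      rw [show (1:ℝ) - 1/2 = 1/2 by norm_num]; ring
    · rfl
  have hid : ∀ s u : ℝ, (F u - F s) + (F (1-s) - F (1-u))
      = (Fstar u - Fstar s) + (Fstar (1-s) - Fstar (1-u)) := by
    intro s u
    rcases le_or_gt u (1/2) with hu | hu <;> rcases le_or_gt s (1/2) with hs | hs
    · rw [hFlow u hu, hFlow s hs, hFhigh (1-s) (by linarith), hFhigh (1-u) (by linarith)]; ring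
    · rw [hFlow u hu, hFhigh s hs.le, hFhigh (1-u) (by linarith), hFlow (1-s) (by linarith),
        show (1:ℝ) - (1-s) = s by ring]; ring
    · rw [hFhigh u hu.le, hFlow s hs, hFhigh (1-s) (by linarith), hFlow (1-u) (by linarith),
        show (1:ℝ) - (1-u) = u by ring]; ring
    · rw [hFhigh u hu.le, hFhigh s hs.le, hFlow (1-s) (by linarith), hFlow (1-u) (by linarith),
        show (1:ℝ) - (1-s) = s by ring, show (1:ℝ) - (1-u) = u by ring]; ring
  have key : ∀ u ∈ Set.Icc (0:ℝ) 1, ∀ s ∈ Set.Icc (0:ℝ) 1,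
      |F u - F s| ≤ |Fstar u - Fstar s| + |Fstar (1-u) - Fstar (1-s)| := by
    have main : ∀ u ∈ Set.Icc (0:ℝ) 1, ∀ s ∈ Set.Icc (0:ℝ) 1, s ≤ u →
        |F u - F s| ≤ |Fstar u - Fstar s| + |Fstar (1-u) - Fstar (1-s)| := by
      intro u hu s hs hsu
      have h1 : 0 ≤ F u - F s := sub_nonneg.mpr (hF_mono hs hu hsu)
      have h2 : 0 ≤ F (1-s) - F (1-u) := sub_nonneg.mpr
        (hF_mono ⟨by linarith [hu.2], by linarith [hu.1]⟩
          ⟨by linarith [hs.2], by linarith [hs.1]⟩ (by linarith))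
      rw [abs_of_nonneg h1]
      calc F u - F s ≤ (F u - F s) + (F (1-s) - F (1-u)) := by linarith
        _ = (Fstar u - Fstar s) + (Fstar (1-s) - Fstar (1-u)) := hid s u
        _ ≤ |Fstar u - Fstar s| + |Fstar (1-s) - Fstar (1-u)| :=
            add_le_add (le_abs_self _) (le_abs_self _)
        _ = |Fstar u - Fstar s| + |Fstar (1-u) - Fstar (1-s)| := by rw [abs_sub_comm (Fstar (1-s))]
    intro u hu s hs
    rcases le_total s u with h | h
    · exact main u hu s hs h
    · rw [abs_sub_comm, abs_sub_comm (Fstar u), abs_sub_comm (Fstar (1-u))]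
      exact main s hs u hu h
  intro s hs
  have h1 : Tendsto (fun u => |Fstar u - Fstar s|) (nhdsWithin s (Set.Icc 0 1)) (nhds 0) := by
    have := ((hFstar_cont s hs).tendsto).sub_const (Fstar s)
    simpa using this.abs
  have hmap : Set.MapsTo (fun u : ℝ => 1 - u) (Set.Icc 0 1) (Set.Icc 0 1) := by
    intro x hx
    simp only [Set.mem_Icc] at hx ⊢
    constructor <;> linarith
  have hcomp : Tendsto (fun u : ℝ => Fstar (1 - u)) (nhdsWithin s (Set.Icc 0 1))
      (nhds (Fstar (1 - s))) := by
    apply (hFstar_cont (1-s) ⟨by linarith [hs.2], by linarith [hs.1]⟩).comp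
      ((continuous_const.sub continuous_id).continuousWithinAt) hmap
  have h2 : Tendsto (fun u => |Fstar (1-u) - Fstar (1-s)|) (nhdsWithin s (Set.Icc 0 1)) (nhds 0) := by
    have := hcomp.sub_const (Fstar (1-s))
    simpa using this.abs
  have hb : Tendsto (fun u => |Fstar u - Fstar s| + |Fstar (1-u) - Fstar (1-s)|)
      (nhdsWithin s (Set.Icc 0 1)) (nhds 0) := by simpa using h1.add h2
  have hF0 : Tendsto (fun u => |F u - F s|) (nhdsWithin s (Set.Icc 0 1)) (nhds 0) := by
    apply squeeze_zero' (Eventually.of_forall fun u => abs_nonneg _)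
      ((eventually_mem_nhdsWithin).mono fun u hu => key u hu s hs) hb
  have : Tendsto (fun u => dist (F u) (F s)) (nhdsWithin s (Set.Icc 0 1)) (nhds 0) := by
    simpa [Real.dist_eq] using hF0
  exact tendsto_iff_dist_tendsto_zero.mpr this


lemma downclosed_eq_range' (S : Finset ℕ) (hdc : ∀ j ∈ S, ∀ i, i ≤ j → i ∈ S) :
    S = Finset.range S.card := by
  rcases S.eq_empty_or_nonempty with h | h
  · simp [h]
  · have hmax := S.max'_mem h
    have h1 : S = Finset.range (S.max' h + 1) := by
      ext i
      simp only [Finset.mem_range, Nat.lt_succ_iff]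
      exact ⟨fun hi => S.le_max' i hi, fun hi => hdc _ hmax i hi⟩
    have h2 : S.card = S.max' h + 1 := by
      conv_lhs => rw [h1]
      rw [Finset.card_range]
    rw [h2, ← h1]

lemma ordered_count_iff (d : ℕ) (v : ℕ → ℝ) (hmono : ∀ j j', j ≤ j' → j' < d → v j ≤ v j')
    (t : ℝ) (j : ℕ) (hj : j < d) [DecidablePred fun i => v i ≤ t] :
    v j ≤ t ↔ j < ((Finset.range d).filter (fun i => v i ≤ t)).card := by
  set S := (Finset.range d).filter (fun i => v i ≤ t) with hS
  have hdc : ∀ a ∈ S, ∀ i, i ≤ a → i ∈ S := by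
    intro a ha i hia
    simp only [hS, Finset.mem_filter, Finset.mem_range] at ha ⊢
    exact ⟨lt_of_le_of_lt hia ha.1, le_trans (hmono i a hia ha.1) ha.2⟩
  have hrng := downclosed_eq_range' S hdc
  have hiff : j ∈ S ↔ j < S.card := by
    constructor
    · intro hmem
      rw [hrng] at hmem
      exact Finset.mem_range.mp hmem
    · intro hlt
      rw [hrng]
      exact Finset.mem_range.mpr hlt
  rw [← hiff]
  simp [hS, hj]

lemma card_filter_comp (d : ℕ) (ord : ℕ → ℕ) (hbij : Set.BijOn ord (Set.Iio d) (Set.Iio d))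
    (P : ℕ → Prop) [DecidablePred P] :
    ((Finset.range d).filter (fun j => P (ord j))).card
      = ((Finset.range d).filter P).card := by
  apply Finset.card_bij (fun j _ => ord j)
  · intro a ha
    simp only [Finset.mem_filter, Finset.mem_range] at ha ⊢
    exact ⟨hbij.mapsTo ha.1, ha.2⟩
  · intro a ha b hb hab
    simp only [Finset.mem_filter, Finset.mem_range] at ha hb
    exact hbij.injOn ha.1 hb.1 hab
  · intro b hb
    simp only [Finset.mem_filter, Finset.mem_range] at hb
    obtain ⟨a, ha, rfl⟩ := hbij.surjOn hb.1
    exact ⟨a, by simp only [Finset.mem_filter, Finset.mem_range]; exact ⟨ha, hb.2⟩, rfl⟩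


lemma tendsto_count_lt (p : ℕ → ℕ → ℝ) (F : ℝ → ℝ)
    (hstab : ∀ t ∈ Set.Icc (0:ℝ) 1, ContinuousWithinAt F (Set.Icc 0 1) t →
      Tendsto (fun d : ℕ => (1/(d:ℝ)) * ∑ i ∈ Finset.range d, (if p d i ≤ t then (1:ℝ) else 0))
        atTop (nhds (F t)))
    (hFc : ∀ s ∈ Set.Icc (0:ℝ) 1, ContinuousWithinAt F (Set.Icc 0 1) s)
    (s : ℝ) (hs0 : 0 < s) (hs1 : s ≤ 1) :
    Tendsto (fun d : ℕ => (1/(d:ℝ)) * ∑ i ∈ Finset.range d, (if p d i < s then (1:ℝ) else 0))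
      atTop (nhds (F s)) := by
  rw [Metric.tendsto_atTop]
  intro ε hε
  -- find u < s close to s
  have hne : (nhdsWithin s (Set.Ioo 0 s)).NeBot := right_nhdsWithin_Ioo_neBot hs0
  have hmem : ∀ᶠ u in nhdsWithin s (Set.Ioo 0 s), |F u - F s| < ε/2 ∧ u ∈ Set.Ioo 0 s := by
    apply Eventually.and
    · have h1 : Tendsto F (nhdsWithin s (Set.Ioo 0 s)) (nhds (F s)) := by
        apply (hFc s ⟨hs0.le, hs1⟩).mono_left
        apply nhdsWithin_mono
        intro x hx
        exact ⟨hx.1.le, le_trans hx.2.le hs1⟩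
      have := (h1.sub_const (F s)).abs
      simp only [sub_self, abs_zero] at this
      exact this.eventually (eventually_lt_nhds (by positivity))
    · exact eventually_mem_nhdsWithin
  obtain ⟨u, hu1, hu2⟩ := hmem.exists
  -- limits at u and s
  have hlimu := hstab u ⟨hu2.1.le, by linarith [hu2.2]⟩ (hFc u ⟨hu2.1.le, by linarith [hu2.2]⟩)
  have hlims := hstab s ⟨hs0.le, hs1⟩ (hFc s ⟨hs0.le, hs1⟩)
  rw [Metric.tendsto_atTop] at hlimu hlims
  obtain ⟨N1, hN1⟩ := hlimu (ε/2) (by positivity)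
  obtain ⟨N2, hN2⟩ := hlims (ε/2) (by positivity)
  refine ⟨max N1 N2, fun d hd => ?_⟩
  have h1 := hN1 d (le_trans (le_max_left _ _) hd)
  have h2 := hN2 d (le_trans (le_max_right _ _) hd)
  rw [Real.dist_eq] at h1 h2 ⊢
  have hd0 : (0:ℝ) ≤ 1/(d:ℝ) := by positivity
  have hcmp1 : (1/(d:ℝ)) * ∑ i ∈ Finset.range d, (if p d i ≤ u then (1:ℝ) else 0)
      ≤ (1/(d:ℝ)) * ∑ i ∈ Finset.range d, (if p d i < s then (1:ℝ) else 0) := by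
    apply mul_le_mul_of_nonneg_left _ hd0
    apply Finset.sum_le_sum
    intro i _
    split_ifs with ha hb
    · exact le_refl _
    · exact absurd (lt_of_le_of_lt ha hu2.2) hb
    · norm_num
    · exact le_refl _
  have hcmp2 : (1/(d:ℝ)) * ∑ i ∈ Finset.range d, (if p d i < s then (1:ℝ) else 0)
      ≤ (1/(d:ℝ)) * ∑ i ∈ Finset.range d, (if p d i ≤ s then (1:ℝ) else 0) := by
    apply mul_le_mul_of_nonneg_left _ hd0
    apply Finset.sum_le_sum
    intro i _
    split_ifs with ha hb
    · exact le_refl _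
    · exact absurd ha.le hb
    · norm_num
    · exact le_refl _
  rw [abs_lt] at h1 h2 ⊢
  have habs := abs_lt.mp hu1
  constructor <;> linarith

lemma tendsto_Nd (p pstar : ℕ → ℕ → ℝ)
    (hpstar : ∀ d i, pstar d i = min (p d i) (1 - p d i))
    (ord : ℕ → ℕ → ℕ)
    (hord_bij : ∀ d, Set.BijOn (ord d) (Set.Iio d) (Set.Iio d))
    (F Fstar : ℝ → ℝ)
    (hFstar : ∀ t, Fstar t = if t ≤ 1/2 then F t + 1 - F (1 - t) else 1)
    (hstab : ∀ t ∈ Set.Icc (0:ℝ) 1, ContinuousWithinAt F (Set.Icc 0 1) t →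
      Tendsto (fun d : ℕ => (1/(d:ℝ)) * ∑ i ∈ Finset.range d, (if p d i ≤ t then (1:ℝ) else 0))
        atTop (nhds (F t)))
    (hFc : ∀ s ∈ Set.Icc (0:ℝ) 1, ContinuousWithinAt F (Set.Icc 0 1) s)
    (t : ℝ) (ht : t ∈ Set.Icc (0:ℝ) 1) :
    Tendsto (fun d : ℕ =>
        (1/(d:ℝ)) * (((Finset.range d).filter (fun j => pstar d (ord d j) ≤ t)).card : ℝ))
      atTop (nhds (Fstar t)) := by
  classical
  have hcard : ∀ d, ((Finset.range d).filter (fun j => pstar d (ord d j) ≤ t)).card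
      = ((Finset.range d).filter (fun i => pstar d i ≤ t)).card := fun d =>
    card_filter_comp d (ord d) (hord_bij d) (fun i => pstar d i ≤ t)
  rcases le_or_gt (1/2 : ℝ) t with hhalf | hhalf
  · have hF1 : Fstar t = 1 := by
      rw [hFstar]; split_ifs with h
      · have ht2 : t = 1/2 := le_antisymm h hhalf
        subst ht2; rw [show (1:ℝ) - 1/2 = 1/2 by norm_num]; ring
      · rfl
    rw [hF1]
    have heq : ∀ d:ℕ, 1 ≤ d → (1/(d:ℝ)) *
        (((Finset.range d).filter (fun j => pstar d (ord d j) ≤ t)).card : ℝ) = 1 := by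
      intro d hd
      rw [hcard]
      have hfull : (Finset.range d).filter (fun i => pstar d i ≤ t) = Finset.range d := by
        apply Finset.filter_true_of_mem
        intro i _
        rw [hpstar]
        rcases le_or_gt (p d i) (1/2) with h | h
        · exact le_trans (min_le_left _ _) (le_trans h hhalf)
        · exact le_trans (min_le_right _ _) (le_trans (by linarith) hhalf)
      rw [hfull, Finset.card_range]
      have : (d:ℝ) ≠ 0 := by positivity
      field_simp
    apply Tendsto.congr' _ tendsto_const_nhds
    filter_upwards [eventually_ge_atTop 1] with d hd
    exact (heq d hd).symm
  · have ht0 : 0 ≤ t := ht.1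
    -- counting identity as naturals
    have hsplitN : ∀ d : ℕ, ((Finset.range d).filter (fun i => pstar d i ≤ t)).card
          + ((Finset.range d).filter (fun i => p d i < 1 - t)).card
        = ((Finset.range d).filter (fun i => p d i ≤ t)).card + d := by
      intro d
      have e1 : (Finset.range d).filter (fun i => pstar d i ≤ t)
          = (Finset.range d).filter (fun i => p d i ≤ t)
            ∪ (Finset.range d).filter (fun i => 1 - t ≤ p d i) := by
        rw [← Finset.filter_or]
        apply Finset.filter_congr
        intro i _
        rw [hpstar, min_le_iff]
        constructor
        · rintro (h | h)
          · exact Or.inl h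
          · exact Or.inr (by linarith)
        · rintro (h | h)
          · exact Or.inl h
          · exact Or.inr (by linarith)
      have hdisj : Disjoint ((Finset.range d).filter (fun i => p d i ≤ t))
          ((Finset.range d).filter (fun i => 1 - t ≤ p d i)) := by
        rw [Finset.disjoint_filter]
        intro x _ hx1 hx2
        linarith
      have e3 : ((Finset.range d).filter (fun i => 1 - t ≤ p d i)).card
          + ((Finset.range d).filter (fun i => p d i < 1 - t)).card = d := by
        have h := Finset.card_filter_add_card_filter_not
          (s := Finset.range d) (p := fun i => 1 - t ≤ p d i)
        rw [Finset.card_range] at h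
        have e : (Finset.range d).filter (fun a => ¬ 1 - t ≤ p d a)
            = (Finset.range d).filter (fun i => p d i < 1 - t) :=
          Finset.filter_congr (fun i _ => by rw [not_le])
        rw [e] at h
        exact h
      rw [e1, Finset.card_union_of_disjoint hdisj]
      omega
    -- limits
    have hta : Tendsto (fun d : ℕ =>
        (1/(d:ℝ)) * (((Finset.range d).filter (fun i => p d i ≤ t)).card : ℝ))
        atTop (nhds (F t)) := by
      have := hstab t ht (hFc t ht)
      apply this.congr
      intro d
      rw [Finset.sum_boole]
    have htb : Tendsto (fun d : ℕ =>
        (1/(d:ℝ)) * (((Finset.range d).filter (fun i => p d i < 1 - t)).card : ℝ))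
        atTop (nhds (F (1 - t))) := by
      have := tendsto_count_lt p F hstab hFc (1 - t) (by linarith) (by linarith)
      apply this.congr
      intro d
      rw [Finset.sum_boole]
    have hFt : Fstar t = F t + (1 - F (1 - t)) := by
      rw [hFstar, if_pos hhalf.le]; ring
    rw [hFt]
    apply Tendsto.congr' _ (hta.add (tendsto_const_nhds.sub htb))
    filter_upwards [eventually_ge_atTop 1] with d hd
    have hd0 : (d:ℝ) ≠ 0 := by positivity
    have hc := hsplitN d
    have hcR : (((Finset.range d).filter (fun i => pstar d i ≤ t)).card : ℝ)
        = (((Finset.range d).filter (fun i => p d i ≤ t)).card : ℝ) + d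
          - (((Finset.range d).filter (fun i => p d i < 1 - t)).card : ℝ) := by
      have := congrArg (fun n : ℕ => (n : ℝ)) hc
      push_cast at this
      linarith
    rw [hcard, hcR]
    field_simp
    ring

lemma quantile_mem (G Q : ℝ → ℝ) (hGcont : ContinuousOn G (Set.Icc 0 1)) (hGhalf : G (1/2) = 1)
    (hQ : ∀ q, Q q = sInf {t | t ∈ Set.Icc (0:ℝ) 1 ∧ q ≤ G t}) (r : ℝ) (hr : r ≤ 1) :
    Q r ∈ Set.Icc (0:ℝ) 1 ∧ r ≤ G (Q r) := by
  have hbdd : BddBelow {t | t ∈ Set.Icc (0:ℝ) 1 ∧ r ≤ G t} := ⟨0, fun x hx => hx.1.1⟩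
  have hset : {t | t ∈ Set.Icc (0:ℝ) 1 ∧ r ≤ G t}
      = Set.Icc (0:ℝ) 1 ∩ G ⁻¹' (Set.Ici r) := by
    ext x; simp [Set.mem_setOf_eq, Set.mem_inter_iff, Set.mem_preimage, Set.mem_Ici]
  have hclosed : IsClosed {t | t ∈ Set.Icc (0:ℝ) 1 ∧ r ≤ G t} := by
    rw [hset]
    exact hGcont.preimage_isClosed_of_isClosed isClosed_Icc isClosed_Ici
  have hne : {t | t ∈ Set.Icc (0:ℝ) 1 ∧ r ≤ G t}.Nonempty :=
    ⟨1/2, ⟨by norm_num, by norm_num⟩, by rw [hGhalf]; exact hr⟩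
  have hmem := hclosed.csInf_mem hne hbdd
  rw [← hQ r] at hmem
  exact hmem

lemma pointwise_quantile (v : ℕ → ℕ → ℝ)
    (hv0 : ∀ d j, j < d → 0 ≤ v d j)
    (hvmono : ∀ d j j', j ≤ j' → j' < d → v d j ≤ v d j')
    (G Q : ℝ → ℝ) (hGcont : ContinuousOn G (Set.Icc 0 1)) (hGhalf : G (1/2) = 1)
    (hQ : ∀ q, Q q = sInf {t | t ∈ Set.Icc (0:ℝ) 1 ∧ q ≤ G t})
    (hconv : ∀ t ∈ Set.Icc (0:ℝ) 1, Tendsto (fun d : ℕ =>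
      (1/(d:ℝ)) * (((Finset.range d).filter (fun j => v d j ≤ t)).card : ℝ))
      atTop (nhds (G t)))
    (q : ℝ) (hq : q ∈ Set.Ioo (0:ℝ) 1) (hcont : ContinuousWithinAt Q (Set.Ioo 0 1) q) :
    Tendsto (fun d : ℕ => v d (Nat.floor (q * d))) atTop (nhds (Q q)) := by
  have hbdd : ∀ r : ℝ, BddBelow {t | t ∈ Set.Icc (0:ℝ) 1 ∧ r ≤ G t} :=
    fun r => ⟨0, fun x hx => hx.1.1⟩
  have hQmem : ∀ r : ℝ, r ≤ 1 → Q r ∈ Set.Icc (0:ℝ) 1 ∧ r ≤ G (Q r) := by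
    intro r hr
    have hset : {t | t ∈ Set.Icc (0:ℝ) 1 ∧ r ≤ G t}
        = Set.Icc (0:ℝ) 1 ∩ G ⁻¹' (Set.Ici r) := by
      ext x; simp [Set.mem_setOf_eq, Set.mem_inter_iff, Set.mem_preimage, Set.mem_Ici]
    have hclosed : IsClosed {t | t ∈ Set.Icc (0:ℝ) 1 ∧ r ≤ G t} := by
      rw [hset]
      exact hGcont.preimage_isClosed_of_isClosed isClosed_Icc isClosed_Ici
    have hne : {t | t ∈ Set.Icc (0:ℝ) 1 ∧ r ≤ G t}.Nonempty :=
      ⟨1/2, ⟨by norm_num, by norm_num⟩, by rw [hGhalf]; exact hr⟩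
    have hmem := hclosed.csInf_mem hne (hbdd r)
    rw [← hQ r] at hmem
    exact hmem
  have hQlt : ∀ r s : ℝ, s ∈ Set.Icc (0:ℝ) 1 → s < Q r → G s < r := by
    intro r s hsI hslt
    by_contra hcon
    push_neg at hcon
    have : Q r ≤ s := by
      rw [hQ]
      exact csInf_le (hbdd r) ⟨hsI, hcon⟩
    linarith
  have hq1 := hQmem q hq.2.le
  have main : ∀ ε : ℝ, 0 < ε → ∀ᶠ d : ℕ in atTop, |v d (Nat.floor (q * d)) - Q q| < ε := by
    intro ε hε
    -- upper bound
    have hupper : ∀ᶠ d : ℕ in atTop, v d (Nat.floor (q * d)) < Q q + ε := by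
      have hne2 : (nhdsWithin q (Set.Ioo q 1)).NeBot := left_nhdsWithin_Ioo_neBot hq.2
      have hev : ∀ᶠ x in nhdsWithin q (Set.Ioo q 1), Q x < Q q + ε ∧ x ∈ Set.Ioo q 1 := by
        apply Eventually.and
        · have h1 : Tendsto Q (nhdsWithin q (Set.Ioo q 1)) (nhds (Q q)) :=
            hcont.mono_left (nhdsWithin_mono _ (fun x hx => ⟨lt_trans hq.1 hx.1, hx.2⟩))
          exact h1.eventually (eventually_lt_nhds (by linarith))
        · exact eventually_mem_nhdsWithin
      obtain ⟨q2, hq2a, hq2b⟩ := hev.exists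
      have ht' := hQmem q2 hq2b.2.le
      have hGt' : q < G (Q q2) := lt_of_lt_of_le hq2b.1 ht'.2
      have hlim := hconv (Q q2) ht'.1
      filter_upwards [hlim.eventually (eventually_gt_nhds hGt'), eventually_ge_atTop 1]
        with d hNd hd1
      have hdpos : (0:ℝ) < d := by exact_mod_cast hd1
      have hflt : Nat.floor (q * d) < d := by
        have h1 : q * d < d := by nlinarith [hq.2]
        have := (Nat.floor_lt (mul_nonneg hq.1.le (Nat.cast_nonneg d))).mpr h1
        simpa using this
      have hcardgt : (Nat.floor (q * d) : ℝ)
          < (((Finset.range d).filter (fun j => v d j ≤ Q q2)).card : ℝ) := by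
        have h2 : q * d < (((Finset.range d).filter (fun j => v d j ≤ Q q2)).card : ℝ) := by
          rw [one_div, inv_mul_eq_div] at hNd
          exact (lt_div_iff₀ hdpos).mp hNd
        exact lt_of_le_of_lt (Nat.floor_le (mul_nonneg hq.1.le (Nat.cast_nonneg d))) h2
      have hjlt : Nat.floor (q * d)
          < ((Finset.range d).filter (fun j => v d j ≤ Q q2)).card := by exact_mod_cast hcardgt
      have hvle := (ordered_count_iff d (v d) (hvmono d) (Q q2) _ hflt).mpr hjlt
      linarith [hq2a]
    -- lower bound
    have hlower : ∀ᶠ d : ℕ in atTop, Q q - ε < v d (Nat.floor (q * d)) := by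
      rcases lt_or_ge (Q q - ε) 0 with hneg | hpos
      · filter_upwards [eventually_ge_atTop 1] with d hd1
        have hdpos : (0:ℝ) < d := by exact_mod_cast hd1
        have hflt : Nat.floor (q * d) < d := by
          have h1 : q * d < d := by nlinarith [hq.2]
          have := (Nat.floor_lt (mul_nonneg hq.1.le (Nat.cast_nonneg d))).mpr h1
          simpa using this
        exact lt_of_lt_of_le hneg (hv0 d _ hflt)
      · obtain ⟨t'', ht''⟩ : ∃ t'', t'' = Q q - ε/2 := ⟨_, rfl⟩
        have ht''I : t'' ∈ Set.Icc (0:ℝ) 1 :=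
          ⟨by rw [ht'']; linarith, by rw [ht'']; linarith [hq1.1.2]⟩
        have hGt'' : G t'' < q := hQlt q t'' ht''I (by rw [ht'']; linarith)
        have hlim := hconv t'' ht''I
        have h1d : Tendsto (fun d : ℕ =>
            (1/(d:ℝ)) * (((Finset.range d).filter (fun j => v d j ≤ t'')).card : ℝ) + 1/(d:ℝ))
            atTop (nhds (G t'' + 0)) := hlim.add tendsto_one_div_atTop_nhds_zero_nat
        rw [add_zero] at h1d
        filter_upwards [h1d.eventually (eventually_lt_nhds hGt''), eventually_ge_atTop 1]
          with d hlt hd1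
        have hdpos : (0:ℝ) < d := by exact_mod_cast hd1
        have hflt : Nat.floor (q * d) < d := by
          have h1 : q * d < d := by nlinarith [hq.2]
          have := (Nat.floor_lt (mul_nonneg hq.1.le (Nat.cast_nonneg d))).mpr h1
          simpa using this
        have hcard_lt : (((Finset.range d).filter (fun j => v d j ≤ t'')).card : ℝ)
            < (Nat.floor (q * d) : ℝ) := by
          have h2 : (((Finset.range d).filter (fun j => v d j ≤ t'')).card : ℝ) < q * d - 1 := by
            rw [one_div, inv_mul_eq_div, ← one_div, ← add_div] at hlt
            have := (div_lt_iff₀ hdpos).mp hlt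
            linarith
          have h3 : q * d - 1 < (Nat.floor (q * d) : ℝ) := by
            have := Nat.lt_floor_add_one (q * d)
            linarith
          linarith
        have hle : ¬ (Nat.floor (q * d)
            < ((Finset.range d).filter (fun j => v d j ≤ t'')).card) := by
          intro hcon
          have : (Nat.floor (q * d) : ℝ)
              < (((Finset.range d).filter (fun j => v d j ≤ t'')).card : ℝ) := by exact_mod_cast hcon
          linarith
        have hnv : ¬ (v d (Nat.floor (q * d)) ≤ t'') := fun hvle =>
          hle ((ordered_count_iff d (v d) (hvmono d) t'' _ hflt).mp hvle)
        push_neg at hnv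
        rw [ht''] at hnv
        linarith
    filter_upwards [hupper, hlower] with d h1 h2
    rw [abs_sub_lt_iff]
    exact ⟨by linarith, by linarith⟩
  rw [Metric.tendsto_atTop]
  intro ε hε
  have := main ε hε
  rw [eventually_atTop] at this
  obtain ⟨N, hN⟩ := this
  exact ⟨N, fun n hn => by rw [Real.dist_eq]; exact hN n hn⟩

lemma keyB (v : ℕ → ℕ → ℝ)
    (hv0 : ∀ d j, j < d → 0 ≤ v d j) (hv1 : ∀ d j, j < d → v d j ≤ 1)
    (hvmono : ∀ d j j', j ≤ j' → j' < d → v d j ≤ v d j')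
    (G Q : ℝ → ℝ) (hGcont : ContinuousOn G (Set.Icc 0 1)) (hGhalf : G (1/2) = 1)
    (hQ : ∀ q, Q q = sInf {t | t ∈ Set.Icc (0:ℝ) 1 ∧ q ≤ G t})
    (hconv : ∀ t ∈ Set.Icc (0:ℝ) 1, Tendsto (fun d : ℕ =>
      (1/(d:ℝ)) * (((Finset.range d).filter (fun j => v d j ≤ t)).card : ℝ)) atTop (nhds (G t)))
    (β : ℝ) (hβ : β ∈ Set.Ioo (0:ℝ) 1)
    (h g : ℝ → ℝ) (hh : Continuous h) (hg : Continuous g)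
    (hhb : ∀ x ∈ Set.Icc (0:ℝ) 1, |h x| ≤ 1) (hgb : ∀ x ∈ Set.Icc (0:ℝ) 1, |g x| ≤ 1) :
    Tendsto (fun d : ℕ => (1/(d:ℝ)) * ∑ j ∈ Finset.range (Nat.floor (β * d)), h (v d j)
        + (1/(d:ℝ)) * ∑ j ∈ Finset.Ico (Nat.floor (β * d)) d, g (v d j)) atTop
      (nhds ((∫ q in (0:ℝ)..β, h (Q q)) + ∫ q in β..(1:ℝ), g (Q q))) := by
  set w : ℕ → ℕ → ℝ := fun d j => max 0 (min (v d j) 1) with hw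
  have hw01 : ∀ d j, w d j ∈ Set.Icc (0:ℝ) 1 := fun d j =>
    ⟨le_max_left _ _, max_le (by norm_num) (min_le_right _ _)⟩
  have hweq : ∀ d j, j < d → w d j = v d j := by
    intro d j hj
    rw [hw]
    simp only
    rw [min_eq_left (hv1 d j hj), max_eq_right (hv0 d j hj)]
  set m : ℕ → ℕ := fun d => Nat.floor (β * d) with hm
  set f : ℕ → ℝ → ℝ := fun d q =>
    if q < (m d : ℝ)/(d:ℝ) then h (w d (Nat.floor (q * d))) else g (w d (Nat.floor (q * d)))
    with hf
  set L : ℝ → ℝ := fun q => if q < β then h (Q q) else g (Q q) with hL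
  -- measurability
  have hfmeas : ∀ d, Measurable (f d) := by
    intro d
    have h1 : Measurable fun q : ℝ => w d (Nat.floor (q * (d:ℝ))) :=
      (measurable_from_top (f := w d)).comp
        (Nat.measurable_floor.comp (measurable_id.mul_const _))
    exact Measurable.ite (measurableSet_Iio (a := (m d : ℝ)/(d:ℝ)))
      (hh.measurable.comp h1) (hg.measurable.comp h1)
  -- monotone quantile extension
  have hbdd : ∀ r : ℝ, BddBelow {t | t ∈ Set.Icc (0:ℝ) 1 ∧ r ≤ G t} :=
    fun r => ⟨0, fun x hx => hx.1.1⟩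
  have hQmono : ∀ a b : ℝ, a ≤ b → b ≤ 1 → Q a ≤ Q b := by
    intro a b hab hb1
    rw [hQ a, hQ b]
    apply csInf_le_csInf (hbdd a)
    · exact ⟨1/2, ⟨by norm_num, by norm_num⟩, by rw [hGhalf]; exact hb1⟩
    · exact fun x hx => ⟨hx.1, le_trans hab hx.2⟩
  set E : ℝ → ℝ := fun q => Q (max 0 (min q 1)) with hE
  have hEmono : Monotone E := by
    intro a b hab
    apply hQmono
    · have h1 : min a 1 ≤ min b 1 := min_le_min hab le_rfl
      exact max_le_max le_rfl h1
    · exact max_le (by norm_num) (min_le_right _ _)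
  have hbad : volume ({x : ℝ | ¬ContinuousAt E x} ∪ {β}) = 0 :=
    Set.Countable.measure_zero
      (hEmono.countable_not_continuousAt.union (Set.countable_singleton β)) _
  have hae_nmem : ∀ᵐ x ∂(volume.restrict (Set.Ioo (0:ℝ) 1)),
      x ∉ ({x : ℝ | ¬ContinuousAt E x} ∪ {β}) :=
    ae_restrict_of_ae (measure_eq_zero_iff_ae_notMem.mp hbad)
  have haemem : ∀ᵐ q ∂(volume.restrict (Set.Ioo (0:ℝ) 1)), q ∈ Set.Ioo (0:ℝ) 1 :=
    ae_restrict_mem measurableSet_Ioo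
  have haelim : ∀ᵐ q ∂(volume.restrict (Set.Ioo (0:ℝ) 1)),
      Tendsto (fun d => f d q) atTop (nhds (L q)) := by
    filter_upwards [hae_nmem, haemem] with q hnmem hqI
    simp only [Set.mem_union, Set.mem_setOf_eq, Set.mem_singleton_iff, not_or, not_not] at hnmem
    obtain ⟨hcontE, hneβ⟩ := hnmem
    have hcontQ : ContinuousWithinAt Q (Set.Ioo 0 1) q := by
      have heq : Set.EqOn E Q (Set.Ioo 0 1) := by
        intro x hx
        rw [hE]
        simp only
        rw [min_eq_left hx.2.le, max_eq_right hx.1.le]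
      exact (hcontE.continuousWithinAt).congr (fun y hy => (heq hy).symm) ((heq hqI).symm)
    have hvq := pointwise_quantile v hv0 hvmono G Q hGcont hGhalf hQ hconv q hqI hcontQ
    have hwq : Tendsto (fun d : ℕ => w d (Nat.floor (q * d))) atTop (nhds (Q q)) := by
      apply hvq.congr'
      filter_upwards [eventually_ge_atTop 1] with d hd1
      have hdpos : (0:ℝ) < d := by exact_mod_cast hd1
      have hflt : Nat.floor (q * d) < d := by
        have h1 : q * d < d := by nlinarith [hqI.2, hqI.1]
        have := (Nat.floor_lt (mul_nonneg hqI.1.le (Nat.cast_nonneg d))).mpr h1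
        simpa using this
      exact (hweq d _ hflt).symm
    rcases Ne.lt_or_gt hneβ with hlt | hgt
    · -- q < β
      have hef : ∀ᶠ d : ℕ in atTop, f d q = h (w d (Nat.floor (q * d))) := by
        have htend : Tendsto (fun d : ℕ => β - 1/(d:ℝ)) atTop (nhds β) := by
          have := tendsto_const_nhds (x := β) (f := atTop (α := ℕ))
          simpa using this.sub tendsto_one_div_atTop_nhds_zero_nat
        filter_upwards [htend.eventually (eventually_gt_nhds hlt), eventually_ge_atTop 1]
          with d h1 hd1
        have hdpos : (0:ℝ) < d := by exact_mod_cast hd1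
        have hcond : q < (m d : ℝ)/(d:ℝ) := by
          rw [lt_div_iff₀ hdpos]
          have h3 : β * d - 1 < (m d : ℝ) := Nat.sub_one_lt_floor (β * d)
          have h5 : (β - 1/(d:ℝ) - q) * d > 0 := mul_pos (by linarith) hdpos
          have hd1' : (1/(d:ℝ))*d = 1 := by field_simp
          nlinarith [h3, h5, hd1']
        rw [hf]
        simp only
        rw [if_pos hcond]
      have hcomp := (hh.tendsto (Q q)).comp hwq
      have hLq : L q = h (Q q) := by rw [hL]; simp only; rw [if_pos hlt]
      rw [hLq]
      exact Tendsto.congr' (hef.mono fun d hd => hd.symm) hcomp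
    · -- β < q
      have hef : ∀ᶠ d : ℕ in atTop, f d q = g (w d (Nat.floor (q * d))) := by
        filter_upwards [eventually_ge_atTop 1] with d hd1
        have hdpos : (0:ℝ) < d := by exact_mod_cast hd1
        have hcond : ¬ (q < (m d : ℝ)/(d:ℝ)) := by
          rw [not_lt, div_le_iff₀ hdpos]
          have h3 : (m d : ℝ) ≤ β * d := Nat.floor_le (mul_nonneg hβ.1.le (Nat.cast_nonneg d))
          nlinarith [h3, hgt, hdpos]
        rw [hf]
        simp only
        rw [if_neg hcond]
      have hcomp := (hg.tendsto (Q q)).comp hwq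
      have hLq : L q = g (Q q) := by rw [hL]; simp only; rw [if_neg (not_lt.mpr hgt.le)]
      rw [hLq]
      exact Tendsto.congr' (hef.mono fun d hd => hd.symm) hcomp
  -- bound
  have hbound : ∀ d : ℕ, ∀ᵐ q ∂(volume.restrict (Set.Ioo (0:ℝ) 1)), ‖f d q‖ ≤ 1 := by
    intro d
    apply Eventually.of_forall
    intro q
    rw [hf]
    simp only [Real.norm_eq_abs]
    split_ifs with hcnd
    · exact hhb _ (hw01 d _)
    · exact hgb _ (hw01 d _)
  have hmeasae : ∀ d, AEStronglyMeasurable (f d) (volume.restrict (Set.Ioo (0:ℝ) 1)) :=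
    fun d => (hfmeas d).aestronglyMeasurable
  have hDCT := MeasureTheory.tendsto_integral_of_dominated_convergence
    (μ := volume.restrict (Set.Ioo (0:ℝ) 1)) (fun _ => (1:ℝ)) hmeasae
    (integrable_const 1) hbound haelim
  -- integral of L
  have hQI : ∀ q : ℝ, q ≤ 1 → Q q ∈ Set.Icc (0:ℝ) 1 :=
    fun q hq => (quantile_mem G Q hGcont hGhalf hQ q hq).1
  have hLmeas : AEStronglyMeasurable L (volume.restrict (Set.Ioo (0:ℝ) 1)) :=
    aestronglyMeasurable_of_tendsto_ae _ hmeasae haelim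
  have hLint : IntegrableOn L (Set.Ioo (0:ℝ) 1) := by
    apply Integrable.mono' (integrable_const 1) hLmeas
    filter_upwards [haemem] with q hq
    rw [hL]
    simp only [Real.norm_eq_abs]
    split_ifs
    · exact hhb _ (hQI q hq.2.le)
    · exact hgb _ (hQI q hq.2.le)
  have hsplitL : ∫ q in Set.Ioo (0:ℝ) 1, L q
      = (∫ q in (0:ℝ)..β, h (Q q)) + ∫ q in β..(1:ℝ), g (Q q) := by
    have hunion : Set.Ioo (0:ℝ) 1 = Set.Ioo 0 β ∪ Set.Ico β 1 :=
      (Set.Ioo_union_Ico_eq_Ioo hβ.1 hβ.2.le).symm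
    have hdisj : Disjoint (Set.Ioo (0:ℝ) β) (Set.Ico β 1) :=
      Set.disjoint_left.mpr (fun x hx hx' => absurd hx.2 (not_lt.mpr hx'.1))
    have hsub1 : Set.Ioo (0:ℝ) β ⊆ Set.Ioo 0 1 :=
      fun x hx => ⟨hx.1, lt_trans hx.2 hβ.2⟩
    have hsub2 : Set.Ico β 1 ⊆ Set.Ioo (0:ℝ) 1 :=
      fun x hx => ⟨lt_of_lt_of_le hβ.1 hx.1, hx.2⟩
    rw [hunion, MeasureTheory.setIntegral_union hdisj measurableSet_Ico
      (hLint.mono_set hsub1) (hLint.mono_set hsub2)]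
    congr 1
    · rw [intervalIntegral.integral_of_le hβ.1.le, MeasureTheory.integral_Ioc_eq_integral_Ioo]
      apply setIntegral_congr_fun measurableSet_Ioo
      intro x hx
      rw [hL]
      simp only
      rw [if_pos hx.2]
    · rw [MeasureTheory.integral_Ico_eq_integral_Ioo,
        intervalIntegral.integral_of_le hβ.2.le, MeasureTheory.integral_Ioc_eq_integral_Ioo]
      apply setIntegral_congr_fun measurableSet_Ioo
      intro x hx
      rw [hL]
      simp only
      rw [if_neg (not_lt.mpr hx.1.le)]
  -- step function integral identity
  have hterm : ∀ᶠ d : ℕ in atTop, (∫ q in Set.Ioo (0:ℝ) 1, f d q)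
      = (1/(d:ℝ)) * ∑ j ∈ Finset.range (m d), h (v d j)
        + (1/(d:ℝ)) * ∑ j ∈ Finset.Ico (m d) d, g (v d j) := by
    filter_upwards [eventually_ge_atTop 1] with d hd1
    have hdpos : (0:ℝ) < d := by exact_mod_cast hd1
    set c : ℕ → ℝ := fun j => if j < m d then h (w d j) else g (w d j) with hc
    have hfint : ∀ a b : ℝ, IntegrableOn (f d) (Set.Ico a b) := by
      intro a b
      apply Integrable.mono' (integrableOn_const (C := (1:ℝ)) measure_Ico_lt_top.ne)
        ((hfmeas d).aestronglyMeasurable.restrict)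
      apply Eventually.of_forall
      intro q
      rw [hf]
      simp only [Real.norm_eq_abs]
      split_ifs
      · exact hhb _ (hw01 d _)
      · exact hgb _ (hw01 d _)
    have hstep : ∀ k : ℕ, k ≤ d → (∫ q in Set.Ico (0:ℝ) ((k:ℝ)/d), f d q)
        = ∑ j ∈ Finset.range k, (1/(d:ℝ)) * c j := by
      intro k hk
      induction k with
      | zero => simp
      | succ n ih =>
        have hn := ih (le_trans (Nat.le_succ n) hk)
        have hcast : (((n+1 : ℕ)) : ℝ) = (n:ℝ) + 1 := by push_cast; ring
        rw [hcast]
        have hle1 : (0:ℝ) ≤ (n:ℝ)/d := by positivity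
        have hle2 : (n:ℝ)/d ≤ ((n:ℝ)+1)/d := by gcongr; linarith
        have e1 : Set.Ico (0:ℝ) (((n:ℝ)+1)/d)
            = Set.Ico 0 ((n:ℝ)/d) ∪ Set.Ico ((n:ℝ)/d) (((n:ℝ)+1)/d) :=
          (Set.Ico_union_Ico_eq_Ico hle1 hle2).symm
        have hdisj2 : Disjoint (Set.Ico (0:ℝ) ((n:ℝ)/d)) (Set.Ico ((n:ℝ)/d) (((n:ℝ)+1)/d)) :=
          Set.disjoint_left.mpr fun x hx hx' => absurd hx.2 (not_lt.mpr hx'.1)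
        have hconst : ∫ q in Set.Ico ((n:ℝ)/d) (((n:ℝ)+1)/d), f d q = (1/(d:ℝ)) * c n := by
          have heqc : ∀ q ∈ Set.Ico ((n:ℝ)/d) (((n:ℝ)+1)/d), f d q = c n := by
            intro q hq
            have hq0 : 0 ≤ q := le_trans hle1 hq.1
            have hfl : Nat.floor (q * d) = n := by
              rw [Nat.floor_eq_iff (mul_nonneg hq0 (Nat.cast_nonneg d))]
              constructor
              · have h6 := hq.1
                rw [div_le_iff₀ hdpos] at h6
                linarith
              · have h6 := hq.2
                rw [lt_div_iff₀ hdpos] at h6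
                push_cast
                linarith
            rw [hf, hc]
            simp only
            rcases lt_or_ge n (m d) with hnm | hnm
            · have hnm' : ((n:ℝ)+1) ≤ (m d : ℝ) := by exact_mod_cast hnm
              have hcond : q < (m d : ℝ)/d := lt_of_lt_of_le hq.2 (by gcongr)
              rw [if_pos hcond, hfl, if_pos hnm]
            · have hnm' : (m d : ℝ) ≤ (n:ℝ) := by exact_mod_cast hnm
              have hcond : ¬ (q < (m d:ℝ)/d) :=
                not_lt.mpr (le_trans (by gcongr) hq.1)
              rw [if_neg hcond, hfl, if_neg (not_lt.mpr hnm)]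
          rw [setIntegral_congr_fun measurableSet_Ico heqc, setIntegral_const,
            measureReal_def, Real.volume_Ico,
            ENNReal.toReal_ofReal (by linarith : (0:ℝ) ≤ ((n:ℝ)+1)/d - (n:ℝ)/d),
            smul_eq_mul]
          congr 1
          field_simp
          ring
        rw [e1, MeasureTheory.setIntegral_union hdisj2 measurableSet_Ico
          (hfint _ _) (hfint _ _), hn, Finset.sum_range_succ, hconst]
    have hfin := hstep d le_rfl
    rw [show ((d:ℝ))/d = 1 from by field_simp] at hfin
    rw [MeasureTheory.integral_Ico_eq_integral_Ioo] at hfin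
    rw [hfin]
    have hmd : m d ≤ d := by
      have h7 : β * d ≤ (d:ℝ) := by nlinarith [hβ.2, hdpos]
      calc m d ≤ Nat.floor ((d:ℝ)) := Nat.floor_le_floor h7
      _ = d := Nat.floor_natCast d
    rw [Finset.range_eq_Ico, ← Finset.sum_Ico_consecutive _ (Nat.zero_le (m d)) hmd]
    congr 1
    · rw [Finset.mul_sum, ← Finset.range_eq_Ico]
      apply Finset.sum_congr rfl
      intro j hj
      have hjm : j < m d := Finset.mem_range.mp hj
      rw [hc]
      simp only
      rw [if_pos hjm, hweq d j (lt_of_lt_of_le hjm hmd)]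
    · rw [Finset.mul_sum]
      apply Finset.sum_congr rfl
      intro j hj
      have hj' := Finset.mem_Ico.mp hj
      rw [hc]
      simp only
      rw [if_neg (not_lt.mpr hj'.1), hweq d j hj'.2]
  rw [← hsplitL]
  exact Filter.Tendsto.congr' hterm hDCT

theorem stmt_5
    -- the triangular array of independent Bernoulli random variables
    {Ω : ℕ → Type*} [∀ d, MeasurableSpace (Ω d)]
    (μ : ∀ d, Measure (Ω d)) [∀ d, IsProbabilityMeasure (μ d)]
    (p : ℕ → ℕ → ℝ) (hp : ∀ d i, i < d → p d i ∈ Set.Icc (0 : ℝ) 1)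
    (X : ∀ d, ℕ → Ω d → ℝ)
    (hmeas : ∀ d i, Measurable (X d i))
    (hval : ∀ d i ω, X d i ω = 0 ∨ X d i ω = 1)
    (hbern : ∀ d i, i < d → μ d {ω | X d i ω = 1} = ENNReal.ofReal (p d i))
    (hindep : ∀ d, iIndepFun
      (fun i : Fin d => X d (i : ℕ)) (μ d))
    -- transformed quantities
    (pstar : ℕ → ℕ → ℝ)
    (hpstar : ∀ d i, pstar d i = min (p d i) (1 - p d i))
    (Xstar : ∀ d, ℕ → Ω d → ℝ)
    (hXstar : ∀ d i ω,
      Xstar d i ω = if p d i ≤ 1 / 2 then X d i ω else 1 - X d i ω)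
    -- an ordering of {0,…,d−1} making `pstar` nondecreasing
    (ord : ℕ → ℕ → ℕ)
    (hord_bij : ∀ d, Set.BijOn (ord d) (Set.Iio d) (Set.Iio d))
    (hord_mono : ∀ d j j', j ≤ j' → j' < d →
      pstar d (ord d j) ≤ pstar d (ord d j'))
    -- the stability assumption
    (F : ℝ → ℝ)
    (hF_mono : MonotoneOn F (Set.Icc 0 1))
    (hF_rc : ∀ t ∈ Set.Ico (0 : ℝ) 1,
      Tendsto F (nhdsWithin t (Set.Ioi t)) (nhds (F t)))
    (hF0 : Tendsto F (nhdsWithin 0 (Set.Ioi 0)) (nhds 0))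
    (hF1 : Tendsto F (nhdsWithin 1 (Set.Iio 1)) (nhds 1))
    (hstab : ∀ t ∈ Set.Icc (0 : ℝ) 1, ContinuousWithinAt F (Set.Icc 0 1) t →
      Tendsto (fun d : ℕ => (1 / (d : ℝ)) *
          ∑ i ∈ Finset.range d, (if p d i ≤ t then (1 : ℝ) else 0))
        atTop (nhds (F t)))
    -- the transformed cdf and its quantile function
    (Fstar : ℝ → ℝ)
    (hFstar : ∀ t, Fstar t = if t ≤ 1 / 2 then F t + 1 - F (1 - t) else 1)
    (hFstar_cont : ContinuousOn Fstar (Set.Icc 0 1))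
    (hFstar_mono : MonotoneOn Fstar (Set.Icc 0 1))
    (Qstar : ℝ → ℝ)
    (hQ : ∀ q, Qstar q = sInf {t | t ∈ Set.Icc (0 : ℝ) 1 ∧ q ≤ Fstar t})
    (β : ℝ) (hβ : β ∈ Set.Ioo (0 : ℝ) 1) :
    -- the normalized naive risk equals the deterministic sum …
    (∀ d : ℕ,
      (∫ ω, (1 / (d : ℝ)) * ∑ j ∈ Finset.range (Nat.floor (β * d)),
            (if Xstar d (ord d j) ω = 0 then (1 : ℝ) else 0) *
              (Xstar d (ord d j) ω - pstar d (ord d j)) ^ 2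
          + (1 / (d : ℝ)) * ∑ j ∈ Finset.Ico (Nat.floor (β * d)) d,
            (Xstar d (ord d j) ω - pstar d (ord d j)) ^ 2 ∂(μ d))
        = (1 / (d : ℝ)) * ∑ j ∈ Finset.range (Nat.floor (β * d)),
            (pstar d (ord d j)) ^ 2 * (1 - pstar d (ord d j))
          + (1 / (d : ℝ)) * ∑ j ∈ Finset.Ico (Nat.floor (β * d)) d,
            pstar d (ord d j) * (1 - pstar d (ord d j))) ∧
    -- … and converges to the limiting integrals
    Tendsto (fun d : ℕ =>
        (1 / (d : ℝ)) * ∑ j ∈ Finset.range (Nat.floor (β * d)),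
            (pstar d (ord d j)) ^ 2 * (1 - pstar d (ord d j))
          + (1 / (d : ℝ)) * ∑ j ∈ Finset.Ico (Nat.floor (β * d)) d,
            pstar d (ord d j) * (1 - pstar d (ord d j)))
      atTop (nhds ((∫ q in (0 : ℝ)..β, (Qstar q) ^ 2 * (1 - Qstar q))
        + ∫ q in β..(1 : ℝ), Qstar q * (1 - Qstar q))) := by
  constructor
  · -- Part 1: exact risk identity for each d
    intro d
    rcases Nat.eq_zero_or_pos d with rfl | hdpos
    · simp
    have hd1 : (1:ℕ) ≤ d := hdpos
    have hordlt : ∀ j, j < d → ord d j < d := fun j hj => (hord_bij d).mapsTo hj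
    have hps01 : ∀ i, i < d → pstar d i ∈ Set.Icc (0:ℝ) 1 := by
      intro i hi
      obtain ⟨h0, h1⟩ := hp d i hi
      rw [hpstar]
      exact ⟨le_min h0 (by linarith), le_trans (min_le_left _ _) h1⟩
    have hvalstar : ∀ i ω, Xstar d i ω = 0 ∨ Xstar d i ω = 1 := by
      intro i ω
      rw [hXstar]
      split_ifs
      · exact hval d i ω
      · rcases hval d i ω with hx | hx
        · right; rw [hx]; ring
        · left; rw [hx]; ring
    have hmeastar : ∀ i, Measurable (Xstar d i) := by
      intro i
      have hfn : Xstar d i = fun ω => if p d i ≤ 1/2 then X d i ω else 1 - X d i ω :=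
        funext (hXstar d i)
      rw [hfn]
      split_ifs
      · exact hmeas d i
      · exact measurable_const.sub (hmeas d i)
    have hdiststar : ∀ i, i < d → μ d {ω | Xstar d i ω = 1} = ENNReal.ofReal (pstar d i) := by
      intro i hi
      obtain ⟨h0, h1⟩ := hp d i hi
      rcases le_or_gt (p d i) (1/2) with hle | hgt
      · have hset : {ω | Xstar d i ω = 1} = {ω | X d i ω = 1} := by
          ext ω
          rw [Set.mem_setOf_eq, Set.mem_setOf_eq, hXstar d i ω, if_pos hle]
        rw [hset, hbern d i hi]
        congr 1
        rw [hpstar]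
        exact (min_eq_left (by linarith)).symm
      · have hset : {ω | Xstar d i ω = 1} = {ω | X d i ω = 1}ᶜ := by
          ext ω
          rw [Set.mem_setOf_eq, Set.mem_compl_iff, Set.mem_setOf_eq, hXstar d i ω,
            if_neg (not_le.mpr hgt)]
          constructor
          · intro hX
            rcases hval d i ω with hx | hx
            · rw [hx]; norm_num
            · rw [hx] at hX; norm_num at hX
          · intro hX
            rcases hval d i ω with hx | hx
            · rw [hx]; ring
            · exact absurd hx hX
        rw [hset, prob_compl_eq_one_sub (show MeasurableSet {ω | X d i ω = 1} from hmeas d i (measurableSet_singleton 1)),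
          hbern d i hi, hpstar, min_eq_right (by linarith)]
        rw [← ENNReal.ofReal_one, ← ENNReal.ofReal_sub _ h0]
    have key1 : ∀ i, i < d →
        Integrable (fun ω => (if Xstar d i ω = 0 then (1:ℝ) else 0)
          * (Xstar d i ω - pstar d i)^2) (μ d) ∧
        (∫ ω, (if Xstar d i ω = 0 then (1:ℝ) else 0) * (Xstar d i ω - pstar d i)^2 ∂(μ d))
          = (pstar d i)^2 * (1 - pstar d i) := by
      intro i hi
      have heq : (fun ω => (if Xstar d i ω = 0 then (1:ℝ) else 0)
          * (Xstar d i ω - pstar d i)^2)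
          = fun ω => if Xstar d i ω = 0 then (pstar d i)^2 else 0 := by
        funext ω
        rcases hvalstar i ω with hx | hx <;> rw [hx] <;> norm_num
      obtain ⟨hint, hival⟩ := integral_two_valued (μ d) (Xstar d i) (hmeastar i) (hvalstar i)
        (pstar d i) (hps01 i hi).1 (hps01 i hi).2 (hdiststar i hi) ((pstar d i)^2) 0
      rw [heq]
      exact ⟨hint, by rw [hival]; ring⟩
    have key2 : ∀ i, i < d →
        Integrable (fun ω => (Xstar d i ω - pstar d i)^2) (μ d) ∧
        (∫ ω, (Xstar d i ω - pstar d i)^2 ∂(μ d)) = pstar d i * (1 - pstar d i) := by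
      intro i hi
      have heq : (fun ω => (Xstar d i ω - pstar d i)^2)
          = fun ω => if Xstar d i ω = 0 then (pstar d i)^2 else (1 - pstar d i)^2 := by
        funext ω
        rcases hvalstar i ω with hx | hx <;> rw [hx] <;> norm_num
      obtain ⟨hint, hival⟩ := integral_two_valued (μ d) (Xstar d i) (hmeastar i) (hvalstar i)
        (pstar d i) (hps01 i hi).1 (hps01 i hi).2 (hdiststar i hi)
        ((pstar d i)^2) ((1 - pstar d i)^2)
      rw [heq]
      exact ⟨hint, by rw [hival]; ring⟩
    have hmle : Nat.floor (β * d) ≤ d := by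
      have hdR : (0:ℝ) < d := by exact_mod_cast hdpos
      have h7 : β * d ≤ (d:ℝ) := by nlinarith [hβ.2]
      calc Nat.floor (β * (d:ℝ)) ≤ Nat.floor ((d:ℝ)) := Nat.floor_le_floor h7
      _ = d := Nat.floor_natCast d
    have hint1 : Integrable (fun ω => (1 / (d : ℝ)) * ∑ j ∈ Finset.range (Nat.floor (β * d)),
        (if Xstar d (ord d j) ω = 0 then (1 : ℝ) else 0)
          * (Xstar d (ord d j) ω - pstar d (ord d j)) ^ 2) (μ d) := by
      apply Integrable.const_mul
      apply integrable_finset_sum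
      intro j hj
      exact (key1 (ord d j) (hordlt j (lt_of_lt_of_le (Finset.mem_range.mp hj) hmle))).1
    have hint2 : Integrable (fun ω => (1 / (d : ℝ)) * ∑ j ∈ Finset.Ico (Nat.floor (β * d)) d,
        (Xstar d (ord d j) ω - pstar d (ord d j)) ^ 2) (μ d) := by
      apply Integrable.const_mul
      apply integrable_finset_sum
      intro j hj
      exact (key2 (ord d j) (hordlt j (Finset.mem_Ico.mp hj).2)).1
    rw [integral_add hint1 hint2, integral_const_mul, integral_const_mul,
      integral_finset_sum _ (fun j hj =>
        (key1 (ord d j) (hordlt j (lt_of_lt_of_le (Finset.mem_range.mp hj) hmle))).1),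
      integral_finset_sum _ (fun j hj => (key2 (ord d j) (hordlt j (Finset.mem_Ico.mp hj).2)).1)]
    congr 1
    · congr 1
      apply Finset.sum_congr rfl
      intro j hj
      exact (key1 (ord d j) (hordlt j (lt_of_lt_of_le (Finset.mem_range.mp hj) hmle))).2
    · congr 1
      apply Finset.sum_congr rfl
      intro j hj
      exact (key2 (ord d j) (hordlt j (Finset.mem_Ico.mp hj).2)).2
  · -- Part 2: convergence
    have hFc := F_contWithin F Fstar hF_mono hFstar hFstar_cont
    have hGhalf : Fstar (1/2) = 1 := by
      rw [hFstar, if_pos le_rfl, show (1:ℝ) - 1/2 = 1/2 by norm_num]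
      ring
    have hv0 : ∀ d j, j < d → 0 ≤ pstar d (ord d j) := by
      intro d j hj
      have hi := (hord_bij d).mapsTo hj
      obtain ⟨h0, h1⟩ := hp d _ hi
      rw [hpstar]
      exact le_min h0 (by linarith)
    have hv1 : ∀ d j, j < d → pstar d (ord d j) ≤ 1 := by
      intro d j hj
      have hi := (hord_bij d).mapsTo hj
      obtain ⟨h0, h1⟩ := hp d _ hi
      rw [hpstar]
      exact le_trans (min_le_left _ _) h1
    have hconv : ∀ t ∈ Set.Icc (0:ℝ) 1, Tendsto (fun d : ℕ =>
        (1/(d:ℝ)) * (((Finset.range d).filter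
          (fun j => pstar d (ord d j) ≤ t)).card : ℝ)) atTop (nhds (Fstar t)) :=
      fun t ht => tendsto_Nd p pstar hpstar ord hord_bij F Fstar hFstar hstab hFc t ht
    exact keyB (fun d j => pstar d (ord d j)) hv0 hv1
      (fun d j j' h1 h2 => hord_mono d j j' h1 h2)
      Fstar Qstar hFstar_cont hGhalf hQ hconv β hβ
      (fun x => x^2 * (1-x)) (fun x => x * (1-x))
      ((continuous_pow 2).mul (continuous_const.sub continuous_id))
      (continuous_id.mul (continuous_const.sub continuous_id))
      (fun x hx => by
        have h1 := hx.1
        have h2 := hx.2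
        show |x^2*(1-x)| ≤ 1
        rw [abs_of_nonneg (by nlinarith)]
        nlinarith)
      (fun x hx => by
        have h1 := hx.1
        have h2 := hx.2
        show |x*(1-x)| ≤ 1
        rw [abs_of_nonneg (by nlinarith)]
        nlinarith)
end
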